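/- arXiv:1103.2717 — 2 statements merged into one kernel-verified Lean document; each statement's English description precedes it below -/
import Mathlib

section
/- Value of the Chio measure on entry-specification events: Let s,t ≥ 2, let ∅ ⊆ I ⊆ J ⊆ {1,…,s−1}×{1,…,t−1}, and let B : I → {−1,0,+1}. If the signed graph (X_B, σ_B) is balanced, then P_chio[E_B^J] = (1/2)^{|I| + f0(X_B) − β0(X_B)}; if (X_B, σ_B) is not balanced, then P_chio[E_B^J] = 0. In particular, P_chio[E_B^J] > 0 if and only if (X_B, σ_B) is balanced. -/
/-- The grid of index positions `{1,…,s-1} × {1,…,t-1}`. -/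
def mgrid (s t : ℕ) : Finset (ℕ × ℕ) := Finset.Icc 1 (s - 1) ×ˢ Finset.Icc 1 (t - 1)

/-- The Chio extension `J̆` of a set `J` of positions:
`J̆ = {(s,t)} ∪ {(i,t) : i ∈ p1(J)} ∪ {(s,j) : j ∈ p2(J)} ∪ J`. -/
def chioExt (s t : ℕ) (J : Finset (ℕ × ℕ)) : Finset (ℕ × ℕ) :=
  insert (s, t) (((J.image Prod.fst).image fun i => (i, t)) ∪
    ((J.image Prod.snd).image fun j => (s, j)) ∪ J)

/-- `A` condenses to `B` on `I`:
`A(i,j)·A(s,t) − A(i,t)·A(s,j) = 2·B(i,j)` for every `(i,j) ∈ I`. -/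
def CondensesTo (s t : ℕ) (I : Finset (ℕ × ℕ)) (A B : ℕ × ℕ → ℤ) : Prop :=
  ∀ p ∈ I, A p * A (s, t) - A (p.1, t) * A (s, p.2) = 2 * B p

/-- `A` encodes a function `E → {−1,+1}`: it takes values `±1` on `E` and is
normalized to `1` off `E`. -/
def IsSignOn (E : Finset (ℕ × ℕ)) (A : ℕ × ℕ → ℤ) : Prop :=
  (∀ p ∈ E, A p = 1 ∨ A p = -1) ∧ ∀ p ∉ E, A p = 1

/-- First projection `p1(I)` of a set of positions. -/
def proj1 (I : Finset (ℕ × ℕ)) : Finset ℕ := I.image Prod.fst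

/-- Second projection `p2(I)` of a set of positions. -/
def proj2 (I : Finset (ℕ × ℕ)) : Finset ℕ := I.image Prod.snd

/-- The vertex set of the bipartite graph `X_B`: a copy `Sum.inl i` of each row index
`i ∈ p1(I)` and a copy `Sum.inr j` of each column index `j ∈ p2(I)`. -/
def vertSet (I : Finset (ℕ × ℕ)) : Finset (ℕ ⊕ ℕ) :=
  (proj1 I).image Sum.inl ∪ (proj2 I).image Sum.inr

/-- `f0(X_B) = |p1(I)| + |p2(I)|`, the number of vertices of `X_B`. -/
def fZero (I : Finset (ℕ × ℕ)) : ℕ := (proj1 I).card + (proj2 I).card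

/-- The underlying graph `X_B` of the signed bipartite graph associated with `B : I → {−1,0,+1}`:
`Sum.inl i` is adjacent to `Sum.inr j` iff `(i,j) ∈ I` and `B (i,j) ≠ 0`. -/
def sGraph (I : Finset (ℕ × ℕ)) (B : ℕ × ℕ → ℤ) : SimpleGraph (ℕ ⊕ ℕ) where
  Adj u v := (∃ p ∈ I, B p ≠ 0 ∧ u = Sum.inl p.1 ∧ v = Sum.inr p.2) ∨
             (∃ p ∈ I, B p ≠ 0 ∧ v = Sum.inl p.1 ∧ u = Sum.inr p.2)
  symm := ⟨fun u v h => Or.symm h⟩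
  loopless := ⟨by
    rintro u (⟨p, -, -, h1, h2⟩ | ⟨p, -, -, h1, h2⟩) <;> subst h1 <;> simp at h2⟩

/-- `β0(X_B)`: the number of connected components of `X_B`, i.e. the number of connected
components of the ambient graph meeting the vertex set of `X_B`. -/
noncomputable def betaZero (I : Finset (ℕ × ℕ)) (B : ℕ × ℕ → ℤ) : ℕ :=
  Set.ncard ((sGraph I B).connectedComponentMk '' (vertSet I : Set (ℕ ⊕ ℕ)))

/-- The sign `σ_B` of an edge of `X_B`, read off from `B`. -/
def eSign (B : ℕ × ℕ → ℤ) : ℕ ⊕ ℕ → ℕ ⊕ ℕ → ℤ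
  | Sum.inl i, Sum.inr j => B (i, j)
  | Sum.inr j, Sum.inl i => B (i, j)
  | Sum.inl _, Sum.inl _ => 0
  | Sum.inr _, Sum.inr _ => 0

/-- The signed graph `(X_B, σ_B)` is balanced: every cycle contains an even number
of edges of sign `−1`. -/
def IsBalancedSG (I : Finset (ℕ × ℕ)) (B : ℕ × ℕ → ℤ) : Prop :=
  ∀ (v : ℕ ⊕ ℕ) (w : (sGraph I B).Walk v v), w.IsCycle →
    Even ((w.darts.filter fun d => decide (eSign B d.toProd.1 d.toProd.2 = -1)).length)

/-- The Chio measure of the entry-specification event `E_B^J`: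
`P_chio[E_B^J] = 2^{−|J̆|} · |{A : J̆ → {±1} : A condenses to B}|`. -/
noncomputable def Pchio (s t : ℕ) (I J : Finset (ℕ × ℕ)) (B : ℕ × ℕ → ℤ) : ℚ :=
  (Set.ncard {A : ℕ × ℕ → ℤ | IsSignOn (chioExt s t J) A ∧ CondensesTo s t I A B} : ℚ) /
    2 ^ (chioExt s t J).card


-- ===== auxiliary theory =====

open SimpleGraph

variable {V : Type*} {G : SimpleGraph V}

/-- product of σ over darts of a walk -/
def wprod (σ : V → V → ℤ) {u v : V} (w : G.Walk u v) : ℤ :=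
  (w.darts.map fun d => σ d.toProd.1 d.toProd.2).prod

@[simp] lemma wprod_nil (σ : V → V → ℤ) {u : V} : wprod σ (Walk.nil : G.Walk u u) = 1 := rfl

@[simp] lemma wprod_cons (σ : V → V → ℤ) {u v w : V} (h : G.Adj u v) (p : G.Walk v w) :
    wprod σ (Walk.cons h p) = σ u v * wprod σ p := by
  simp [wprod]

@[simp] lemma wprod_append (σ : V → V → ℤ) {u v w : V} (p : G.Walk u v) (q : G.Walk v w) :
    wprod σ (p.append q) = wprod σ p * wprod σ q := by
  simp [wprod, Walk.darts_append]

lemma wprod_reverse (σ : V → V → ℤ) (hσ : ∀ a b, σ a b = σ b a) {u v : V} (p : G.Walk u v) :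
    wprod σ p.reverse = wprod σ p := by
  unfold wprod
  rw [Walk.darts_reverse, List.map_reverse, List.prod_reverse, List.map_map]
  congr 1
  exact List.map_congr_left fun d _ => hσ _ _

lemma wprod_pm (σ : V → V → ℤ) (hσ : ∀ a b, G.Adj a b → σ a b = 1 ∨ σ a b = -1)
    {u v : V} (p : G.Walk u v) : wprod σ p = 1 ∨ wprod σ p = -1 := by
  induction p with
  | nil => exact Or.inl rfl
  | cons h q ih =>
    rw [wprod_cons]
    rcases hσ _ _ h with h1 | h1 <;> rcases ih with h2 | h2 <;> simp [h1, h2]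

open SimpleGraph Walk in
/-- In a walk with nodup support, no dart starts at the final vertex. -/
lemma no_dart_fst_end {a b : V} (p : G.Walk a b) (hp : p.support.Nodup)
    {d : G.Dart} (hd : d ∈ p.darts) : d.toProd.1 ≠ b := by
  induction p with
  | nil => simp at hd
  | @cons u c w h q ih =>
    rw [Walk.support_cons, List.nodup_cons] at hp
    rw [Walk.darts_cons, List.mem_cons] at hd
    rcases hd with rfl | hd
    · intro hab; exact hp.1 (hab ▸ q.end_mem_support)
    · exact ih hp.2 hd

open SimpleGraph Walk in
/-- In a walk with nodup support and length ≥ 2, no dart is (start, end). -/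
lemma no_dart_start_end {a b : V} (p : G.Walk a b) (hp : p.support.Nodup)
    (hl : 2 ≤ p.length) {d : G.Dart} (hd : d ∈ p.darts) : d.toProd ≠ (a, b) := by
  cases p with
  | nil => simp at hd
  | @cons u c w h q =>
    rw [Walk.support_cons, List.nodup_cons] at hp
    rw [Walk.darts_cons, List.mem_cons] at hd
    rcases hd with rfl | hd
    · -- d = ⟨(a, c), h⟩; if c = b then q : Walk b b with length ≥ 1, b twice in support
      intro hEq
      have hcb : c = b := congrArg Prod.snd hEq
      subst hcb
      have hq : 1 ≤ q.length := by
        simp only [Walk.length_cons] at hl; omega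
      -- q : Walk c c with length ≥ 1: c ∈ q.support.tail
      have : c ∈ q.support.tail := by
        cases q with
        | nil => simp at hq
        | cons h' r => simpa using r.end_mem_support
      have := hp.2
      rw [q.support_eq_cons, List.nodup_cons] at this
      exact this.1 ‹c ∈ q.support.tail›
    · intro hEq
      have : a ∈ q.support := by
        have := Walk.dart_fst_mem_support_of_mem_darts q hd
        rwa [congrArg Prod.fst hEq] at this
      exact hp.1 this

open SimpleGraph Walk in
lemma edge_end_start_not_mem {a b : V} (p : G.Walk a b) (hp : p.support.Nodup)
    (hl : 2 ≤ p.length) : s(b, a) ∉ p.edges := by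
  intro he
  rw [Walk.edges, List.mem_map] at he
  obtain ⟨d, hd, hde⟩ := he
  rw [SimpleGraph.Dart.edge, Sym2.eq_iff] at hde
  rcases hde with ⟨h1, h2⟩ | ⟨h1, h2⟩
  · exact no_dart_fst_end p hp hd h1
  · exact no_dart_start_end p hp hl hd (Prod.ext h1 h2)

open SimpleGraph Walk in
lemma wprod_rotate [DecidableEq V] (σ : V → V → ℤ) {u v : V} (c : G.Walk v v)
    (h : u ∈ c.support) : wprod σ (c.rotate u h) = wprod σ c :=
  List.Perm.prod_eq (((Walk.rotate_darts c u h).perm).map _)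

open SimpleGraph Walk in
lemma closed_split [DecidableEq V] (σ : V → V → ℤ) {n : ℕ}
    (ih : ∀ (v : V) (w : G.Walk v v), w.length ≤ n → wprod σ w = 1)
    {u : V} (w : G.Walk u u) (hlen : w.length ≤ n + 1)
    (hcount : 2 ≤ w.support.tail.count u) : wprod σ w = 1 := by
  cases w with
  | nil => simp
  | @cons _ c _ h p =>
    have hu2 : 2 ≤ p.support.count u := by simpa using hcount
    have hup : u ∈ p.support := by
      rw [← List.count_pos_iff]; omega
    have hspec := Walk.take_spec p hup
    have hcq : (p.takeUntil u hup).support.count u = 1 :=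
      Walk.count_support_takeUntil_eq_one p hup
    have hsplit : p.support.count u
        = (p.takeUntil u hup).support.count u + (p.dropUntil u hup).support.tail.count u := by
      conv_lhs => rw [← hspec]
      rw [Walk.support_append, List.count_append]
    have hrpos : 1 ≤ (p.dropUntil u hup).length := by
      have h1 : 1 ≤ (p.dropUntil u hup).support.tail.count u := by omega
      have h2 := List.count_le_length (a := u) (l := (p.dropUntil u hup).support.tail)
      have h3 : (p.dropUntil u hup).support.tail.length = (p.dropUntil u hup).length := by
        simp [List.length_tail, Walk.length_support]
      omega
    have hlensum : (p.takeUntil u hup).length + (p.dropUntil u hup).length = p.length := by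
      conv_rhs => rw [← hspec]
      rw [Walk.length_append]
    have hplen : p.length ≤ n := by
      simp only [Walk.length_cons] at hlen; omega
    have e1 : wprod σ (Walk.cons h (p.takeUntil u hup)) = 1 := by
      apply ih
      rw [Walk.length_cons]; omega
    have e2 : wprod σ (p.dropUntil u hup) = 1 := by
      apply ih; omega
    calc wprod σ (Walk.cons h p) = σ u c * wprod σ p := wprod_cons σ h p
    _ = σ u c * (wprod σ (p.takeUntil u hup) * wprod σ (p.dropUntil u hup)) := by
        conv_lhs => rw [← hspec]
        rw [wprod_append]
    _ = wprod σ (Walk.cons h (p.takeUntil u hup)) * wprod σ (p.dropUntil u hup) := by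
        rw [wprod_cons]; ring
    _ = 1 := by rw [e1, e2, mul_one]

open SimpleGraph Walk in
lemma closed_wprod_eq_one [DecidableEq V] (σ : V → V → ℤ)
    (hσs : ∀ a b : V, σ a b = σ b a)
    (hσ1 : ∀ a b : V, G.Adj a b → σ a b = 1 ∨ σ a b = -1)
    (hcyc : ∀ (v : V) (w : G.Walk v v), w.IsCycle → wprod σ w = 1) :
    ∀ (v : V) (w : G.Walk v v), wprod σ w = 1 := by
  suffices H : ∀ (n : ℕ) (v : V) (w : G.Walk v v), w.length ≤ n → wprod σ w = 1 by
    exact fun v w => H w.length v w le_rfl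
  intro n
  induction n with
  | zero =>
    intro v w hw
    cases w with
    | nil => simp
    | cons h p => simp at hw
  | succ n ih =>
    intro v w hw
    by_cases hnd : w.support.tail.Nodup
    · cases w with
      | nil => simp
      | @cons _ c _ h p =>
        have hp : p.IsPath := (Walk.isPath_def p).mpr (by simpa using hnd)
        cases p with
        | nil => exact absurd h (G.loopless.irrefl v)
        | @cons _ c2 _ h2 q =>
          cases q with
          | nil =>
            rcases hσ1 v c h with h1 | h1 <;>
              rw [wprod_cons, wprod_cons, wprod_nil, mul_one, hσs c v, h1] <;> norm_num
          | cons h3 r =>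
            apply hcyc
            rw [Walk.cons_isCycle_iff]
            refine ⟨hp, edge_end_start_not_mem _ ((Walk.isPath_def _).mp hp) ?_⟩
            simp only [Walk.length_cons]; omega
    · obtain ⟨u, hu⟩ := List.exists_duplicate_iff_not_nodup.mpr hnd
      have hus : u ∈ w.support := List.mem_of_mem_tail hu.mem
      have hperm : wprod σ (w.rotate u hus) = wprod σ w := wprod_rotate σ w hus
      have hcount : 2 ≤ (w.rotate u hus).support.tail.count u := by
        rw [((Walk.support_rotate w u hus).perm).count_eq]
        exact List.duplicate_iff_two_le_count.mp hu
      rw [← hperm]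
      exact closed_split σ ih (w.rotate u hus)
        (by
          have hl := ((Walk.rotate_darts w u hus).perm).length_eq
          rw [Walk.length_darts, Walk.length_darts] at hl
          omega) hcount

open SimpleGraph in
/-- telescoping: if x is ±1-valued and x u * x v = τ u v on edges, then
wprod τ along a walk is x at the endpoints. -/
lemma wprod_of_potential (τ : V → V → ℤ) (x : V → ℤ) (hx : ∀ v, x v * x v = 1)
    (hsol : ∀ a b : V, G.Adj a b → x a * x b = τ a b) {u v : V} (w : G.Walk u v) :
    wprod τ w = x u * x v := by
  induction w with
  | nil => rw [wprod_nil, hx]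
  | @cons a c b h p ih =>
    rw [wprod_cons, ih, ← hsol a c h]
    have hc := hx c
    have : x c ^ 2 = 1 := by rw [sq]; exact hc
    ring_nf
    rw [this]
    ring

open SimpleGraph in
/-- a vertex function constant across edges is constant on reachability classes -/
lemma const_of_reachable {z : V → ℤ} (hz : ∀ a b : V, G.Adj a b → z a = z b)
    {u v : V} (h : G.Reachable u v) : z u = z v := by
  obtain ⟨w⟩ := h
  induction w with
  | nil => rfl
  | cons h p ih => exact (hz _ _ h).trans ih

lemma wprod_copy (σ : V → V → ℤ) {u v u' v' : V} (p : G.Walk u v) (hu : u = u') (hv : v = v') :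
    wprod σ (p.copy hu hv) = wprod σ p := by subst hu; subst hv; rfl

open SimpleGraph in
/-- From triviality of wprod τ on closed walks, construct a potential. -/
lemma exists_potential (τ : V → V → ℤ)
    (hτs : ∀ a b : V, τ a b = τ b a)
    (hτ1 : ∀ a b : V, G.Adj a b → τ a b = 1 ∨ τ a b = -1)
    (hall : ∀ (v : V) (w : G.Walk v v), wprod τ w = 1) :
    ∃ x : V → ℤ, (∀ v, x v = 1 ∨ x v = -1) ∧ ∀ a b : V, G.Adj a b → x a * x b = τ a b := by
  classical
  have hreach : ∀ v : V, G.Reachable (G.connectedComponentMk v).out v := by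
    intro v
    exact (ConnectedComponent.eq).mp ((G.connectedComponentMk v).out_eq)
  set x : V → ℤ := fun v => wprod τ (hreach v).some with hxdef
  have hxpm : ∀ v, x v = 1 ∨ x v = -1 := fun v => wprod_pm τ hτ1 _
  refine ⟨x, hxpm, ?_⟩
  intro a b hab
  have hcc : G.connectedComponentMk a = G.connectedComponentMk b :=
    ConnectedComponent.sound hab.reachable
  have hout : (G.connectedComponentMk a).out = (G.connectedComponentMk b).out := by rw [hcc]
  -- closed walk: wa ++ (edge) ++ wb.reverse
  set wa := (hreach a).some
  set wb := (hreach b).some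
  have hclosed := hall (G.connectedComponentMk a).out
    (wa.append ((Walk.cons hab (wb.reverse.copy rfl hout.symm) : G.Walk a _)))
  rw [wprod_append, wprod_cons] at hclosed
  have hcopy : wprod τ (wb.reverse.copy rfl hout.symm) = wprod τ wb := by
    rw [wprod_copy, wprod_reverse τ hτs]
  rw [hcopy] at hclosed
  have hxa : wprod τ wa = x a := rfl
  have hxb : wprod τ wb = x b := rfl
  rw [hxa, hxb] at hclosed
  rcases hxpm a with h1 | h1 <;> rcases hxpm b with h2 | h2 <;>
    rcases hτ1 a b hab with h3 | h3 <;> rw [h1, h2, h3] at hclosed ⊢ <;> omega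


-- ===== specialization to sGraph / eSign =====
section Specialize
open SimpleGraph

variable {I : Finset (ℕ × ℕ)} {B : ℕ × ℕ → ℤ}

lemma sGraph_adj_shape {u v : ℕ ⊕ ℕ} (h : (sGraph I B).Adj u v) :
    (∃ i j, u = Sum.inl i ∧ v = Sum.inr j ∧ (i, j) ∈ I ∧ B (i, j) ≠ 0) ∨
    (∃ i j, v = Sum.inl i ∧ u = Sum.inr j ∧ (i, j) ∈ I ∧ B (i, j) ≠ 0) := by
  rcases h with ⟨p, hp, hb, h1, h2⟩ | ⟨p, hp, hb, h1, h2⟩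
  · exact Or.inl ⟨p.1, p.2, h1, h2, by simpa using hp, by simpa using hb⟩
  · exact Or.inr ⟨p.1, p.2, h1, h2, by simpa using hp, by simpa using hb⟩

lemma sGraph_adj_mk {i j : ℕ} (hp : (i, j) ∈ I) (hb : B (i, j) ≠ 0) :
    (sGraph I B).Adj (Sum.inl i) (Sum.inr j) :=
  Or.inl ⟨(i, j), hp, hb, rfl, rfl⟩

lemma eSign_symm (B : ℕ × ℕ → ℤ) : ∀ u v : ℕ ⊕ ℕ, eSign B u v = eSign B v u := by
  intro u v; cases u <;> cases v <;> rfl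

lemma eSign_pm (hB : ∀ p ∈ I, B p = -1 ∨ B p = 0 ∨ B p = 1) :
    ∀ u v : ℕ ⊕ ℕ, (sGraph I B).Adj u v → eSign B u v = 1 ∨ eSign B u v = -1 := by
  intro u v h
  rcases sGraph_adj_shape h with ⟨i, j, rfl, rfl, hp, hb⟩ | ⟨i, j, rfl, rfl, hp, hb⟩ <;>
  · show B (i, j) = 1 ∨ B (i, j) = -1
    rcases hB _ hp with h1 | h1 | h1 <;> simp_all

lemma mem_vertSet_inl {i : ℕ} : Sum.inl i ∈ vertSet I ↔ i ∈ proj1 I := by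
  simp [vertSet]

lemma mem_vertSet_inr {j : ℕ} : Sum.inr j ∈ vertSet I ↔ j ∈ proj2 I := by
  simp [vertSet]

lemma adj_mem_vertSet {u v : ℕ ⊕ ℕ} (h : (sGraph I B).Adj u v) :
    u ∈ vertSet I ∧ v ∈ vertSet I := by
  rcases sGraph_adj_shape h with ⟨i, j, rfl, rfl, hp, hb⟩ | ⟨i, j, rfl, rfl, hp, hb⟩ <;>
    constructor <;> simp only [mem_vertSet_inl, mem_vertSet_inr, proj1, proj2,
      Finset.mem_image] <;> exact ⟨(i, j), hp, rfl⟩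

/-- parity of a vertex in the bipartite graph -/
def bpar : ℕ ⊕ ℕ → ZMod 2 := Sum.elim (fun _ => 0) (fun _ => 1)

lemma adj_bpar {u v : ℕ ⊕ ℕ} (h : (sGraph I B).Adj u v) : bpar v = bpar u + 1 := by
  rcases sGraph_adj_shape h with ⟨i, j, rfl, rfl, -, -⟩ | ⟨i, j, rfl, rfl, -, -⟩ <;>
    simp [bpar] <;> decide

lemma walk_bpar {u v : ℕ ⊕ ℕ} (w : (sGraph I B).Walk u v) :
    (w.length : ZMod 2) + bpar u = bpar v := by
  induction w with
  | nil => simp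
  | @cons a c b h p ih =>
    rw [Walk.length_cons]
    push_cast
    have hac : bpar c = bpar a + 1 := adj_bpar h
    rw [← ih, hac]
    ring

lemma closed_even_length {v : ℕ ⊕ ℕ} (w : (sGraph I B).Walk v v) : Even w.length := by
  have := walk_bpar w
  have h0 : (w.length : ZMod 2) = 0 := by
    have h1 : (w.length : ZMod 2) + bpar v = 0 + bpar v := by rw [this, zero_add]
    exact add_right_cancel h1
  rw [Nat.even_iff, ← Nat.dvd_iff_mod_eq_zero]
  exact (ZMod.natCast_eq_zero_iff _ _).mp h0

/-- wprod of the negated sign -/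
lemma wprod_neg {V : Type*} {G : SimpleGraph V} (σ : V → V → ℤ) {u v : V} (w : G.Walk u v) :
    wprod (fun a b => -(σ a b)) w = (-1) ^ w.length * wprod σ w := by
  induction w with
  | nil => simp
  | cons h p ih => rw [wprod_cons, wprod_cons, ih, Walk.length_cons, pow_succ]; ring

lemma filter_map_neg_len {α : Type*} (f : α → ℤ) (l : List α) :
    ((l.map f).filter fun x => decide (x = -1)).length
      = (l.filter fun d => decide (f d = -1)).length := by
  induction l with
  | nil => rfl
  | cons a l ih =>
    by_cases h : f a = -1 <;> simp [List.filter_cons, h, ih]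

lemma list_prod_pm (l : List ℤ) (h : ∀ x ∈ l, x = 1 ∨ x = -1) :
    l.prod = (-1 : ℤ) ^ (l.filter fun x => decide (x = -1)).length := by
  induction l with
  | nil => rfl
  | cons a l ih =>
    have ha := h a List.mem_cons_self
    have ih' := ih fun x hx => h x (List.mem_cons_of_mem a hx)
    rcases ha with ha | ha <;> simp [List.filter_cons, ha, ih', pow_succ] <;> ring

lemma prod_pm_eq_one_iff (l : List ℤ) (h : ∀ x ∈ l, x = 1 ∨ x = -1) :
    l.prod = 1 ↔ Even (l.filter fun x => decide (x = -1)).length := by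
  rw [list_prod_pm l h]
  constructor
  · intro h1
    by_contra hodd
    rw [Nat.not_even_iff_odd] at hodd
    rw [hodd.neg_one_pow] at h1
    norm_num at h1
  · intro he; rw [he.neg_one_pow]

lemma darts_pm (hB : ∀ p ∈ I, B p = -1 ∨ B p = 0 ∨ B p = 1)
    {u v : ℕ ⊕ ℕ} (w : (sGraph I B).Walk u v) :
    ∀ x ∈ w.darts.map fun d => eSign B d.toProd.1 d.toProd.2, x = 1 ∨ x = -1 := by
  intro x hx
  rw [List.mem_map] at hx
  obtain ⟨d, hd, rfl⟩ := hx
  exact eSign_pm hB _ _ d.adj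

lemma balanced_iff_wprod (hB : ∀ p ∈ I, B p = -1 ∨ B p = 0 ∨ B p = 1) :
    IsBalancedSG I B ↔
      ∀ (v : ℕ ⊕ ℕ) (w : (sGraph I B).Walk v v), w.IsCycle → wprod (eSign B) w = 1 := by
  unfold IsBalancedSG
  apply forall_congr'; intro v
  apply forall_congr'; intro w
  apply imp_congr_right; intro _
  rw [show wprod (eSign B) w = (w.darts.map fun d => eSign B d.toProd.1 d.toProd.2).prod from rfl]
  rw [prod_pm_eq_one_iff _ (darts_pm hB w), filter_map_neg_len]

end Specialize


-- ===== solution sets =====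
section Solutions
open SimpleGraph

/-- sign type -/
abbrev SgnT := {r : ℤ // r = 1 ∨ r = -1}

def sgnEquivBool : SgnT ≃ Bool where
  toFun r := decide (r.1 = 1)
  invFun b := if b then ⟨1, Or.inl rfl⟩ else ⟨-1, Or.inr rfl⟩
  left_inv := by rintro ⟨r, rfl | rfl⟩ <;> norm_num
  right_inv := by intro b; cases b <;> norm_num

lemma pm_mul {a b : ℤ} (ha : a = 1 ∨ a = -1) (hb : b = 1 ∨ b = -1) :
    a * b = 1 ∨ a * b = -1 := by rcases ha with rfl | rfl <;> rcases hb with rfl | rfl <;> norm_num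

/-- a solution of the vertex-sign system -/
def IsSol (I : Finset (ℕ × ℕ)) (B : ℕ × ℕ → ℤ) (x : ℕ ⊕ ℕ → ℤ) : Prop :=
  (∀ v, x v = 1 ∨ x v = -1) ∧ (∀ v ∉ vertSet I, x v = 1) ∧
  ∀ p ∈ I, B p ≠ 0 → x (Sum.inl p.1) * x (Sum.inr p.2) = -B p

variable {I : Finset (ℕ × ℕ)} {B : ℕ × ℕ → ℤ}

lemma sol_potential {x : ℕ ⊕ ℕ → ℤ} (hx : IsSol I B x) :
    ∀ a b : ℕ ⊕ ℕ, (sGraph I B).Adj a b → x a * x b = -(eSign B a b) := by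
  intro a b h
  rcases sGraph_adj_shape h with ⟨i, j, rfl, rfl, hp, hb⟩ | ⟨i, j, rfl, rfl, hp, hb⟩
  · exact hx.2.2 (i, j) hp hb
  · rw [mul_comm]; exact hx.2.2 (i, j) hp hb

lemma pm_sq {a : ℤ} (ha : a = 1 ∨ a = -1) : a * a = 1 := by
  rcases ha with rfl | rfl <;> norm_num

lemma bal_of_sol (hB : ∀ p ∈ I, B p = -1 ∨ B p = 0 ∨ B p = 1)
    {x : ℕ ⊕ ℕ → ℤ} (hx : IsSol I B x) : IsBalancedSG I B := by
  rw [balanced_iff_wprod hB]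
  intro v w _
  have h1 : wprod (fun a b => -(eSign B a b)) w = x v * x v :=
    wprod_of_potential _ x (fun v => pm_sq (hx.1 v)) (sol_potential hx) w
  rw [wprod_neg (eSign B) w, (closed_even_length w).neg_one_pow, one_mul] at h1
  rw [h1, pm_sq (hx.1 v)]

lemma sol_of_bal (hB : ∀ p ∈ I, B p = -1 ∨ B p = 0 ∨ B p = 1)
    (hbal : IsBalancedSG I B) : ∃ x, IsSol I B x := by
  have hτs : ∀ a b : ℕ ⊕ ℕ, -(eSign B a b) = -(eSign B b a) := by
    intro a b; rw [eSign_symm B a b]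
  have hτ1 : ∀ a b : ℕ ⊕ ℕ, (sGraph I B).Adj a b →
      -(eSign B a b) = 1 ∨ -(eSign B a b) = -1 := by
    intro a b h; rcases eSign_pm hB a b h with h1 | h1 <;> rw [h1] <;> norm_num
  have hcyc := (balanced_iff_wprod hB).mp hbal
  have hσall := closed_wprod_eq_one (eSign B) (eSign_symm B) (eSign_pm hB) hcyc
  have hall : ∀ (v : ℕ ⊕ ℕ) (w : (sGraph I B).Walk v v),
      wprod (fun a b => -(eSign B a b)) w = 1 := by
    intro v w
    rw [wprod_neg (eSign B) w, (closed_even_length w).neg_one_pow, one_mul]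
    exact hσall v w
  obtain ⟨x', hx'pm, hx'e⟩ := exists_potential (G := sGraph I B)
    (fun a b => -(eSign B a b)) hτs hτ1 hall
  classical
  refine ⟨fun v => if v ∈ vertSet I then x' v else 1, ?_, ?_, ?_⟩
  · intro v; by_cases hv : v ∈ vertSet I <;> simp [hv]
    exact hx'pm v
  · intro v hv; simp [hv]
  · intro p hp hb
    have hadj : (sGraph I B).Adj (Sum.inl p.1) (Sum.inr p.2) := sGraph_adj_mk (by simpa using hp) (by simpa using hb)
    have h1 : Sum.inl p.1 ∈ vertSet I :=
      mem_vertSet_inl.mpr (Finset.mem_image.mpr ⟨p, hp, rfl⟩)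
    have h2 : Sum.inr p.2 ∈ vertSet I :=
      mem_vertSet_inr.mpr (Finset.mem_image.mpr ⟨p, hp, rfl⟩)
    simp only [h1, h2, if_true]
    have := hx'e _ _ hadj
    rw [this]
    show -(eSign B (Sum.inl p.1) (Sum.inr p.2)) = -B p
    show -(B (p.1, p.2)) = -B p
    rw [Prod.mk.eta]

lemma reachable_mem_vertSet {u v : ℕ ⊕ ℕ} (hu : u ∈ vertSet I)
    (h : (sGraph I B).Reachable u v) : v ∈ vertSet I := by
  obtain ⟨w⟩ := h
  revert hu
  induction w with
  | nil => exact fun h => h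
  | cons h p ih => exact fun _ => ih (adj_mem_vertSet h).2

end Solutions

-- ===== counting solutions =====
section CountSol
open SimpleGraph

variable {I : Finset (ℕ × ℕ)} {B : ℕ × ℕ → ℤ}

lemma sol_ratio_const {x x0 : ℕ ⊕ ℕ → ℤ} (hx : IsSol I B x) (hx0 : IsSol I B x0)
    {u v : ℕ ⊕ ℕ} (h : (sGraph I B).Reachable u v) :
    x u * x0 u = x v * x0 v := by
  apply const_of_reachable (z := fun v => x v * x0 v) _ h
  intro a b hab
  show x a * x0 a = x b * x0 b
  have h1 := sol_potential hx a b hab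
  have h2 := sol_potential hx0 a b hab
  have heq : x a * x b = x0 a * x0 b := by rw [h1, h2]
  rcases hx.1 a with e1 | e1 <;> rcases hx.1 b with e2 | e2 <;>
    rcases hx0.1 a with e3 | e3 <;> rcases hx0.1 b with e4 | e4 <;>
    rw [e1, e2, e3, e4] at heq ⊢ <;> omega

noncomputable def solEquiv (hB : ∀ p ∈ I, B p = -1 ∨ B p = 0 ∨ B p = 1)
    (x0 : ℕ ⊕ ℕ → ℤ) (hx0 : IsSol I B x0) :
    {x : ℕ ⊕ ℕ → ℤ // IsSol I B x} ≃
      (((sGraph I B).connectedComponentMk '' (vertSet I : Set (ℕ ⊕ ℕ))) → SgnT) := by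
  classical
  have hout_mem : ∀ C : ((sGraph I B).connectedComponentMk '' (vertSet I : Set (ℕ ⊕ ℕ)) : Set _),
      (C : (sGraph I B).ConnectedComponent).out ∈ vertSet I := by
    rintro ⟨C, v, hv, rfl⟩
    exact reachable_mem_vertSet hv
      ((ConnectedComponent.eq).mp (((sGraph I B).connectedComponentMk v).out_eq).symm)
  refine
  { toFun := fun x C => ⟨x.1 (C : (sGraph I B).ConnectedComponent).out *
      x0 (C : (sGraph I B).ConnectedComponent).out, pm_mul (x.2.1 _) (hx0.1 _)⟩
    invFun := fun g => ⟨fun v => if hv : v ∈ vertSet I then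
      (g ⟨(sGraph I B).connectedComponentMk v, ⟨v, hv, rfl⟩⟩).1 * x0 v else 1, ?_, ?_, ?_⟩
    left_inv := ?_
    right_inv := ?_ }
  · intro v
    by_cases hv : v ∈ vertSet I
    · simp only [hv, dif_pos]
      exact pm_mul (g _).2 (hx0.1 v)
    · simp [hv]
  · intro v hv; simp [hv]
  · intro p hp hb
    have h1 : Sum.inl p.1 ∈ vertSet I :=
      mem_vertSet_inl.mpr (Finset.mem_image.mpr ⟨p, hp, rfl⟩)
    have h2 : Sum.inr p.2 ∈ vertSet I :=
      mem_vertSet_inr.mpr (Finset.mem_image.mpr ⟨p, hp, rfl⟩)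
    have hadj : (sGraph I B).Adj (Sum.inl p.1) (Sum.inr p.2) := sGraph_adj_mk hp hb
    have hCeq : (⟨(sGraph I B).connectedComponentMk (Sum.inl p.1), ⟨_, h1, rfl⟩⟩ :
        ((sGraph I B).connectedComponentMk '' (vertSet I : Set (ℕ ⊕ ℕ)) : Set _)) =
        ⟨(sGraph I B).connectedComponentMk (Sum.inr p.2), ⟨_, h2, rfl⟩⟩ :=
      Subtype.ext (ConnectedComponent.sound hadj.reachable)
    simp only [h1, h2, dif_pos]
    rw [hCeq]
    have := sol_potential hx0 _ _ hadj
    have hg := (g ⟨(sGraph I B).connectedComponentMk (Sum.inr p.2), ⟨_, h2, rfl⟩⟩).2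
    have hB0 : x0 (Sum.inl p.1) * x0 (Sum.inr p.2) = -B p := hx0.2.2 p hp hb
    set a := (g ⟨(sGraph I B).connectedComponentMk (Sum.inr p.2), ⟨_, h2, rfl⟩⟩).1
    calc a * x0 (Sum.inl p.1) * (a * x0 (Sum.inr p.2))
        = (a * a) * (x0 (Sum.inl p.1) * x0 (Sum.inr p.2)) := by ring
      _ = -B p := by rw [pm_sq hg, one_mul, hB0]
  · rintro ⟨x, hx⟩
    apply Subtype.ext
    funext v
    by_cases hv : v ∈ vertSet I
    · simp only [hv, dif_pos]
      have hr : (sGraph I B).Reachable ((sGraph I B).connectedComponentMk v).out v :=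
        (ConnectedComponent.eq).mp (((sGraph I B).connectedComponentMk v).out_eq)
      rw [sol_ratio_const hx hx0 hr]
      calc x v * x0 v * x0 v = x v * (x0 v * x0 v) := by ring
        _ = x v := by rw [pm_sq (hx0.1 v), mul_one]
    · simp only [hv, dif_neg, not_false_iff]
      exact (hx.2.1 v hv).symm
  · intro g
    funext C
    apply Subtype.ext
    have hm := hout_mem C
    show (if hv : (C : (sGraph I B).ConnectedComponent).out ∈ vertSet I then _ else 1) *
      x0 (C : (sGraph I B).ConnectedComponent).out = (g C).1
    rw [dif_pos hm]
    have hCeq : (⟨(sGraph I B).connectedComponentMk (C : (sGraph I B).ConnectedComponent).out,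
        ⟨_, hm, rfl⟩⟩ : ((sGraph I B).connectedComponentMk '' (vertSet I : Set (ℕ ⊕ ℕ)) : Set _))
        = C := Subtype.ext ((C : (sGraph I B).ConnectedComponent).out_eq)
    rw [hCeq]
    calc (g C).1 * x0 _ * x0 _ = (g C).1 * (x0 _ * x0 _) := by ring
      _ = (g C).1 := by rw [pm_sq (hx0.1 _), mul_one]

lemma card_sol (hB : ∀ p ∈ I, B p = -1 ∨ B p = 0 ∨ B p = 1)
    (hbal : IsBalancedSG I B) :
    Nat.card {x : ℕ ⊕ ℕ → ℤ // IsSol I B x} = 2 ^ betaZero I B := by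
  obtain ⟨x0, hx0⟩ := sol_of_bal hB hbal
  rw [Nat.card_congr (solEquiv hB x0 hx0)]
  have hfin : ((sGraph I B).connectedComponentMk '' (vertSet I : Set (ℕ ⊕ ℕ))).Finite :=
    ((vertSet I).finite_toSet).image _
  haveI := hfin.to_subtype
  rw [Nat.card_fun, Nat.card_congr sgnEquivBool, Nat.card_coe_set_eq]
  have h2 : Nat.card Bool = 2 := by simp [Nat.card_eq_fintype_card]
  rw [h2]
  rfl

end CountSol


-- ===== positions =====
section Positions

variable {s t : ℕ} {I J : Finset (ℕ × ℕ)} {B : ℕ × ℕ → ℤ}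

def borderI (s t : ℕ) (I : Finset (ℕ × ℕ)) : Finset (ℕ × ℕ) :=
  (proj1 I).image (fun i => (i, t)) ∪ (proj2 I).image (fun j => (s, j))

def coreSet (s t : ℕ) (I : Finset (ℕ × ℕ)) : Finset (ℕ × ℕ) :=
  insert (s, t) (borderI s t I ∪ I)

def freeSet (s t : ℕ) (I J : Finset (ℕ × ℕ)) : Finset (ℕ × ℕ) :=
  chioExt s t J \ coreSet s t I

lemma grid_bounds (hs : 2 ≤ s) (ht : 2 ≤ t) (hJ : J ⊆ mgrid s t) {p : ℕ × ℕ}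
    (hp : p ∈ J) : 1 ≤ p.1 ∧ p.1 < s ∧ 1 ≤ p.2 ∧ p.2 < t := by
  have := hJ hp
  rw [mgrid, Finset.mem_product, Finset.mem_Icc, Finset.mem_Icc] at this
  omega

lemma mem_proj1_lt (hs : 2 ≤ s) (ht : 2 ≤ t) (hJ : J ⊆ mgrid s t) {i : ℕ}
    (hi : i ∈ proj1 J) : 1 ≤ i ∧ i < s := by
  obtain ⟨p, hp, rfl⟩ := Finset.mem_image.mp hi
  exact ⟨(grid_bounds hs ht hJ hp).1, (grid_bounds hs ht hJ hp).2.1⟩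

lemma mem_proj2_lt (hs : 2 ≤ s) (ht : 2 ≤ t) (hJ : J ⊆ mgrid s t) {j : ℕ}
    (hj : j ∈ proj2 J) : 1 ≤ j ∧ j < t := by
  obtain ⟨p, hp, rfl⟩ := Finset.mem_image.mp hj
  exact ⟨(grid_bounds hs ht hJ hp).2.2.1, (grid_bounds hs ht hJ hp).2.2.2⟩

lemma mem_chioExt {q : ℕ × ℕ} : q ∈ chioExt s t J ↔
    q = (s, t) ∨ (∃ i ∈ proj1 J, q = (i, t)) ∨ (∃ j ∈ proj2 J, q = (s, j)) ∨ q ∈ J := by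
  simp only [chioExt, Finset.mem_insert, Finset.mem_union, Finset.mem_image, proj1, proj2]
  constructor
  · rintro (h | (⟨i, hi, rfl⟩ | ⟨j, hj, rfl⟩) | h)
    · exact Or.inl h
    · exact Or.inr (Or.inl ⟨i, hi, rfl⟩)
    · exact Or.inr (Or.inr (Or.inl ⟨j, hj, rfl⟩))
    · exact Or.inr (Or.inr (Or.inr h))
  · rintro (h | ⟨i, hi, rfl⟩ | ⟨j, hj, rfl⟩ | h)
    · exact Or.inl h
    · exact Or.inr (Or.inl (Or.inl ⟨i, hi, rfl⟩))
    · exact Or.inr (Or.inl (Or.inr ⟨j, hj, rfl⟩))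
    · exact Or.inr (Or.inr h)

lemma st_mem_chioExt : (s, t) ∈ chioExt s t J := Finset.mem_insert_self _ _

lemma row_mem_chioExt (hIJ : I ⊆ J) {i : ℕ} (hi : i ∈ proj1 I) :
    (i, t) ∈ chioExt s t J :=
  mem_chioExt.mpr (Or.inr (Or.inl ⟨i, Finset.image_subset_image hIJ hi, rfl⟩))

lemma col_mem_chioExt (hIJ : I ⊆ J) {j : ℕ} (hj : j ∈ proj2 I) :
    (s, j) ∈ chioExt s t J :=
  mem_chioExt.mpr (Or.inr (Or.inr (Or.inl ⟨j, Finset.image_subset_image hIJ hj, rfl⟩)))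

lemma J_mem_chioExt {p : ℕ × ℕ} (hp : p ∈ J) : p ∈ chioExt s t J :=
  mem_chioExt.mpr (Or.inr (Or.inr (Or.inr hp)))

lemma coreSet_subset (hIJ : I ⊆ J) : coreSet s t I ⊆ chioExt s t J := by
  intro q hq
  rw [coreSet, Finset.mem_insert, Finset.mem_union] at hq
  rcases hq with rfl | h | h
  · exact st_mem_chioExt
  · rw [borderI, Finset.mem_union] at h
    rcases h with h | h
    · obtain ⟨i, hi, rfl⟩ := Finset.mem_image.mp h
      exact row_mem_chioExt hIJ hi
    · obtain ⟨j, hj, rfl⟩ := Finset.mem_image.mp h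
      exact col_mem_chioExt hIJ hj
  · exact J_mem_chioExt (hIJ h)

lemma card_borderI (hs : 2 ≤ s) (ht : 2 ≤ t) (hIJ : I ⊆ J) (hJ : J ⊆ mgrid s t) :
    (borderI s t I).card = fZero I := by
  rw [borderI, Finset.card_union_of_disjoint, Finset.card_image_of_injective _
      (fun a b h => (Prod.mk.injEq _ _ _ _).mp h |>.1),
    Finset.card_image_of_injective _ (fun a b h => (Prod.mk.injEq _ _ _ _).mp h |>.2)]
  · rfl
  · rw [Finset.disjoint_left]
    rintro q h1 h2
    obtain ⟨i, hi, rfl⟩ := Finset.mem_image.mp h1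
    obtain ⟨j, hj, hij⟩ := Finset.mem_image.mp h2
    have : i < s := (mem_proj1_lt hs ht hJ (Finset.image_subset_image hIJ hi)).2
    have : j = t := ((Prod.mk.injEq _ _ _ _).mp hij).2
    have : s = i := ((Prod.mk.injEq _ _ _ _).mp hij).1
    omega

lemma card_coreSet (hs : 2 ≤ s) (ht : 2 ≤ t) (hIJ : I ⊆ J) (hJ : J ⊆ mgrid s t) :
    (coreSet s t I).card = 1 + fZero I + I.card := by
  have hst : (s, t) ∉ borderI s t I ∪ I := by
    rw [Finset.mem_union, borderI, Finset.mem_union]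
    rintro ((h | h) | h)
    · obtain ⟨i, hi, hij⟩ := Finset.mem_image.mp h
      have := (mem_proj1_lt hs ht hJ (Finset.image_subset_image hIJ hi)).2
      have := ((Prod.mk.injEq _ _ _ _).mp hij).1
      omega
    · obtain ⟨j, hj, hij⟩ := Finset.mem_image.mp h
      have := (mem_proj2_lt hs ht hJ (Finset.image_subset_image hIJ hj)).2
      have := ((Prod.mk.injEq _ _ _ _).mp hij).2
      omega
    · have := (grid_bounds hs ht hJ (hIJ h)).2.1
      omega
  have hdisj : Disjoint (borderI s t I) I := by
    rw [Finset.disjoint_left]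
    intro q h1 h2
    have hb := grid_bounds hs ht hJ (hIJ h2)
    rw [borderI, Finset.mem_union] at h1
    rcases h1 with h | h
    · obtain ⟨i, hi, hij⟩ := Finset.mem_image.mp h
      have := ((Prod.mk.injEq _ _ _ _).mp hij).2
      omega
    · obtain ⟨j, hj, hij⟩ := Finset.mem_image.mp h
      have := ((Prod.mk.injEq _ _ _ _).mp hij).1
      omega
  rw [coreSet, Finset.card_insert_of_notMem hst, Finset.card_union_of_disjoint hdisj,
    card_borderI hs ht hIJ hJ]
  omega

lemma card_freeSet (hs : 2 ≤ s) (ht : 2 ≤ t) (hIJ : I ⊆ J) (hJ : J ⊆ mgrid s t) :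
    (freeSet s t I J).card = (chioExt s t J).card - (1 + fZero I + I.card) := by
  rw [freeSet, Finset.card_sdiff_of_subset (coreSet_subset hIJ), card_coreSet hs ht hIJ hJ]

lemma coreSet_le (hs : 2 ≤ s) (ht : 2 ≤ t) (hIJ : I ⊆ J) (hJ : J ⊆ mgrid s t) :
    1 + fZero I + I.card ≤ (chioExt s t J).card := by
  rw [← card_coreSet hs ht hIJ hJ]
  exact Finset.card_le_card (coreSet_subset hIJ)

end Positions


-- ===== condensation forcing =====
lemma force1 {a e b c β : ℤ} (ha : a = 1 ∨ a = -1) (he : e = 1 ∨ e = -1)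
    (hb : b = 1 ∨ b = -1) (hc : c = 1 ∨ c = -1) (hβ : β = 1 ∨ β = -1)
    (h : a * e - b * c = 2 * β) : a = β * e ∧ b * c = -β := by
  rcases ha with rfl | rfl <;> rcases he with rfl | rfl <;> rcases hb with rfl | rfl <;>
    rcases hc with rfl | rfl <;> rcases hβ with rfl | rfl <;> (norm_num at h <;> norm_num)

lemma force0 {a e b c : ℤ} (ha : a = 1 ∨ a = -1) (he : e = 1 ∨ e = -1)
    (hb : b = 1 ∨ b = -1) (hc : c = 1 ∨ c = -1)
    (h : a * e - b * c = 0) : a = e * (b * c) := by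
  rcases ha with rfl | rfl <;> rcases he with rfl | rfl <;> rcases hb with rfl | rfl <;>
    rcases hc with rfl | rfl <;> (norm_num at h <;> norm_num)

-- ===== reconstruction =====
section Recon

variable (s t : ℕ) (I J : Finset (ℕ × ℕ)) (B : ℕ × ℕ → ℤ)

def recon (x : ℕ ⊕ ℕ → ℤ) (g : {q // q ∈ freeSet s t I J} → SgnT) (ε : ℤ) :
    ℕ × ℕ → ℤ := fun q =>
  if q = (s, t) then ε
  else if q.2 = t ∧ q.1 ∈ proj1 I then x (Sum.inl q.1)
  else if q.1 = s ∧ q.2 ∈ proj2 I then x (Sum.inr q.2)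
  else if q ∈ I then (if B q = 0 then ε * (x (Sum.inl q.1) * x (Sum.inr q.2)) else B q * ε)
  else if hq : q ∈ freeSet s t I J then (g ⟨q, hq⟩).1
  else 1

variable {s t I J B}
variable {x : ℕ ⊕ ℕ → ℤ} {g : {q // q ∈ freeSet s t I J} → SgnT} {ε : ℤ}

lemma recon_st : recon s t I J B x g ε (s, t) = ε := by simp [recon]

lemma recon_row (hs : 2 ≤ s) (ht : 2 ≤ t) (hIJ : I ⊆ J) (hJ : J ⊆ mgrid s t) {i : ℕ} (hi : i ∈ proj1 I) :
    recon s t I J B x g ε (i, t) = x (Sum.inl i) := by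
  have h1 : i < s := (mem_proj1_lt hs ht hJ (Finset.image_subset_image hIJ hi)).2
  have h2 : (i, t) ≠ (s, t) := by simp; omega
  rw [recon, if_neg h2, if_pos ⟨rfl, hi⟩]

lemma recon_col (hs : 2 ≤ s) (ht : 2 ≤ t) (hIJ : I ⊆ J) (hJ : J ⊆ mgrid s t) {j : ℕ} (hj : j ∈ proj2 I) :
    recon s t I J B x g ε (s, j) = x (Sum.inr j) := by
  have h1 : j < t := (mem_proj2_lt hs ht hJ (Finset.image_subset_image hIJ hj)).2
  have h2 : (s, j) ≠ (s, t) := by simp; omega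
  have h3 : ¬((s, j).2 = t ∧ (s, j).1 ∈ proj1 I) := by
    rintro ⟨h, -⟩; simp at h; omega
  rw [recon, if_neg h2, if_neg h3, if_pos ⟨rfl, hj⟩]

lemma recon_I (hs : 2 ≤ s) (ht : 2 ≤ t) (hIJ : I ⊆ J) (hJ : J ⊆ mgrid s t) {p : ℕ × ℕ} (hp : p ∈ I) :
    recon s t I J B x g ε p =
      (if B p = 0 then ε * (x (Sum.inl p.1) * x (Sum.inr p.2)) else B p * ε) := by
  have hb := grid_bounds hs ht hJ (hIJ hp)
  have h2 : p ≠ (s, t) := by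
    intro h; rw [h] at hb; omega
  have h3 : ¬(p.2 = t ∧ p.1 ∈ proj1 I) := by rintro ⟨h, -⟩; omega
  have h4 : ¬(p.1 = s ∧ p.2 ∈ proj2 I) := by rintro ⟨h, -⟩; omega
  rw [recon, if_neg h2, if_neg h3, if_neg h4, if_pos hp]

lemma recon_free {q : ℕ × ℕ} (hq : q ∈ freeSet s t I J) :
    recon s t I J B x g ε q = (g ⟨q, hq⟩).1 := by
  have hnc : q ∉ coreSet s t I := (Finset.mem_sdiff.mp hq).2
  rw [coreSet, Finset.mem_insert, Finset.mem_union, borderI, Finset.mem_union] at hnc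
  push_neg at hnc
  obtain ⟨h1, h2, h3⟩ := hnc
  have h2' : ¬(q.2 = t ∧ q.1 ∈ proj1 I) := by
    rintro ⟨ha, hb⟩
    exact h2.1 (Finset.mem_image.mpr ⟨q.1, hb, by rw [← ha]⟩)
  have h3' : ¬(q.1 = s ∧ q.2 ∈ proj2 I) := by
    rintro ⟨ha, hb⟩
    exact h2.2 (Finset.mem_image.mpr ⟨q.2, hb, by rw [← ha]⟩)
  rw [recon, if_neg h1, if_neg h2', if_neg h3', if_neg h3, dif_pos hq]

lemma recon_out (hIJ : I ⊆ J) {q : ℕ × ℕ} (hq : q ∉ chioExt s t J) :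
    recon s t I J B x g ε q = 1 := by
  have h1 : q ≠ (s, t) := fun h => hq (h ▸ st_mem_chioExt)
  have h2 : ¬(q.2 = t ∧ q.1 ∈ proj1 I) := by
    rintro ⟨ha, hb⟩
    exact hq (by
      have : q = (q.1, t) := by rw [← ha]
      rw [this]; exact row_mem_chioExt hIJ hb)
  have h3 : ¬(q.1 = s ∧ q.2 ∈ proj2 I) := by
    rintro ⟨ha, hb⟩
    exact hq (by
      have : q = (s, q.2) := by rw [← ha]
      rw [this]; exact col_mem_chioExt hIJ hb)
  have h4 : q ∉ I := fun h => hq (J_mem_chioExt (hIJ h))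
  have h5 : q ∉ freeSet s t I J := fun h => hq (Finset.mem_sdiff.mp h).1
  rw [recon, if_neg h1, if_neg h2, if_neg h3, if_neg h4, dif_neg h5]

lemma recon_mem (hs : 2 ≤ s) (ht : 2 ≤ t) (hIJ : I ⊆ J) (hJ : J ⊆ mgrid s t) (hB : ∀ p ∈ I, B p = -1 ∨ B p = 0 ∨ B p = 1)
    (hx : IsSol I B x) (hε : ε = 1 ∨ ε = -1) :
    IsSignOn (chioExt s t J) (recon s t I J B x g ε) ∧
      CondensesTo s t I (recon s t I J B x g ε) B := by
  have hpm : ∀ q, recon s t I J B x g ε q = 1 ∨ recon s t I J B x g ε q = -1 := by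
    intro q
    rw [recon]
    split_ifs with h1 h2 h3 h4 h5
    · exact hε
    · exact hx.1 _
    · exact hx.1 _
    · exact pm_mul hε (pm_mul (hx.1 _) (hx.1 _))
    · rcases hB q h4 with h | h | h
      · rw [h]; rcases hε with rfl | rfl <;> norm_num
      · exact absurd h h5
      · rw [h]; rcases hε with rfl | rfl <;> norm_num
    all_goals first
      | (exact (g _).2)
      | (exact Or.inl rfl)
  constructor
  · exact ⟨fun q _ => hpm q, fun q hq => recon_out hIJ hq⟩
  · intro p hp
    have h1 : p.1 ∈ proj1 I := Finset.mem_image.mpr ⟨p, hp, rfl⟩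
    have h2 : p.2 ∈ proj2 I := Finset.mem_image.mpr ⟨p, hp, rfl⟩
    have e1 : recon s t I J B x g ε (s, t) = ε := recon_st
    have e2 : recon s t I J B x g ε (p.1, t) = x (Sum.inl p.1) := recon_row hs ht hIJ hJ h1
    have e3 : recon s t I J B x g ε (s, p.2) = x (Sum.inr p.2) := recon_col hs ht hIJ hJ h2
    have e4 := recon_I (B := B) (x := x) (g := g) (ε := ε) hs ht hIJ hJ hp
    rw [e1, e2, e3, e4]
    by_cases hb : B p = 0
    · rw [if_pos hb, hb]
      have hsq := pm_sq hε
      have hrw : ε * (x (Sum.inl p.1) * x (Sum.inr p.2)) * ε - x (Sum.inl p.1) * x (Sum.inr p.2)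
          = (ε * ε - 1) * (x (Sum.inl p.1) * x (Sum.inr p.2)) := by ring
      rw [hrw, hsq]
      ring
    · rw [if_neg hb]
      have hsol := hx.2.2 p hp hb
      rw [hsol]
      have := pm_sq hε
      calc B p * ε * ε - -B p = B p * (ε * ε) + B p := by ring
        _ = 2 * B p := by rw [this]; ring

end Recon


-- ===== forward extraction and grand equivalence =====
section Grand

variable {s t : ℕ} {I J : Finset (ℕ × ℕ)} {B : ℕ × ℕ → ℤ}

def extractX (s t : ℕ) (I : Finset (ℕ × ℕ)) (A : ℕ × ℕ → ℤ) : ℕ ⊕ ℕ → ℤ := fun v =>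
  if v ∈ vertSet I then A (Sum.elim (fun i => (i, t)) (fun j => (s, j)) v) else 1

lemma freeSet_subset : freeSet s t I J ⊆ chioExt s t J := Finset.sdiff_subset

lemma extractX_sol (hs : 2 ≤ s) (ht : 2 ≤ t) (hIJ : I ⊆ J) (hJ : J ⊆ mgrid s t)
    (hB : ∀ p ∈ I, B p = -1 ∨ B p = 0 ∨ B p = 1) {A : ℕ × ℕ → ℤ}
    (hA1 : IsSignOn (chioExt s t J) A) (hA2 : CondensesTo s t I A B) :
    IsSol I B (extractX s t I A) := by
  refine ⟨?_, ?_, ?_⟩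
  · intro v
    rw [extractX]
    split_ifs with hv
    · cases v with
      | inl i => exact hA1.1 _ (row_mem_chioExt hIJ (mem_vertSet_inl.mp hv))
      | inr j => exact hA1.1 _ (col_mem_chioExt hIJ (mem_vertSet_inr.mp hv))
    · exact Or.inl rfl
  · intro v hv; rw [extractX, if_neg hv]
  · intro p hp hb
    have h1 : p.1 ∈ proj1 I := Finset.mem_image.mpr ⟨p, hp, rfl⟩
    have h2 : p.2 ∈ proj2 I := Finset.mem_image.mpr ⟨p, hp, rfl⟩
    have hv1 : (Sum.inl p.1 : ℕ ⊕ ℕ) ∈ vertSet I := mem_vertSet_inl.mpr h1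
    have hv2 : (Sum.inr p.2 : ℕ ⊕ ℕ) ∈ vertSet I := mem_vertSet_inr.mpr h2
    have hx1 : extractX s t I A (Sum.inl p.1) = A (p.1, t) := by
      simp [extractX, hv1]
    have hx2 : extractX s t I A (Sum.inr p.2) = A (s, p.2) := by
      simp [extractX, hv2]
    rw [hx1, hx2]
    have ha := hA1.1 p (J_mem_chioExt (hIJ hp))
    have he := hA1.1 (s, t) st_mem_chioExt
    have hb' := hA1.1 (p.1, t) (row_mem_chioExt hIJ h1)
    have hc := hA1.1 (s, p.2) (col_mem_chioExt hIJ h2)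
    have hβ : B p = 1 ∨ B p = -1 := by rcases hB p hp with h | h | h <;> tauto
    exact (force1 ha he hb' hc hβ (hA2 p hp)).2

noncomputable def grandEquiv (hs : 2 ≤ s) (ht : 2 ≤ t) (hIJ : I ⊆ J) (hJ : J ⊆ mgrid s t)
    (hB : ∀ p ∈ I, B p = -1 ∨ B p = 0 ∨ B p = 1) :
    {A : ℕ × ℕ → ℤ // IsSignOn (chioExt s t J) A ∧ CondensesTo s t I A B} ≃
      {x : ℕ ⊕ ℕ → ℤ // IsSol I B x} × ({q // q ∈ freeSet s t I J} → SgnT) × SgnT where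
  toFun A := ⟨⟨extractX s t I A.1, extractX_sol hs ht hIJ hJ hB A.2.1 A.2.2⟩,
    fun q => ⟨A.1 q.1, A.2.1.1 q.1 (freeSet_subset q.2)⟩,
    ⟨A.1 (s, t), A.2.1.1 _ st_mem_chioExt⟩⟩
  invFun w := ⟨recon s t I J B w.1.1 w.2.1 w.2.2.1,
    (recon_mem hs ht hIJ hJ hB w.1.2 w.2.2.2).1,
    (recon_mem hs ht hIJ hJ hB w.1.2 w.2.2.2).2⟩
  left_inv := by
    rintro ⟨A, hA1, hA2⟩
    apply Subtype.ext
    funext q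
    show recon s t I J B (extractX s t I A) _ (A (s, t)) q = A q
    by_cases h1 : q = (s, t)
    · rw [h1, recon_st]
    by_cases h2 : q.2 = t ∧ q.1 ∈ proj1 I
    · have hq : q = (q.1, t) := by rw [← h2.1]
      rw [hq, recon_row hs ht hIJ hJ h2.2, extractX,
        if_pos (mem_vertSet_inl.mpr h2.2), Sum.elim_inl]
    by_cases h3 : q.1 = s ∧ q.2 ∈ proj2 I
    · have hq : q = (s, q.2) := by rw [← h3.1]
      rw [hq, recon_col hs ht hIJ hJ h3.2, extractX,
        if_pos (mem_vertSet_inr.mpr h3.2), Sum.elim_inr]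
    by_cases h4 : q ∈ I
    · rw [recon_I hs ht hIJ hJ h4]
      have hq1 : q.1 ∈ proj1 I := Finset.mem_image.mpr ⟨q, h4, rfl⟩
      have hq2 : q.2 ∈ proj2 I := Finset.mem_image.mpr ⟨q, h4, rfl⟩
      have hx1 : extractX s t I A (Sum.inl q.1) = A (q.1, t) := by
        rw [extractX, if_pos (mem_vertSet_inl.mpr hq1), Sum.elim_inl]
      have hx2 : extractX s t I A (Sum.inr q.2) = A (s, q.2) := by
        rw [extractX, if_pos (mem_vertSet_inr.mpr hq2), Sum.elim_inr]
      rw [hx1, hx2]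
      have ha := hA1.1 q (J_mem_chioExt (hIJ h4))
      have he := hA1.1 (s, t) st_mem_chioExt
      have hb' := hA1.1 (q.1, t) (row_mem_chioExt hIJ hq1)
      have hc := hA1.1 (s, q.2) (col_mem_chioExt hIJ hq2)
      by_cases hb : B q = 0
      · rw [if_pos hb]
        have h0 : A q * A (s, t) - A (q.1, t) * A (s, q.2) = 0 := by
          rw [hA2 q h4, hb]; ring
        exact (force0 ha he hb' hc h0).symm
      · rw [if_neg hb]
        have hβ : B q = 1 ∨ B q = -1 := by rcases hB q h4 with h | h | h <;> tauto
        exact (force1 ha he hb' hc hβ (hA2 q h4)).1.symm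
    by_cases h5 : q ∈ freeSet s t I J
    · rw [recon_free h5]
    -- otherwise q ∉ chioExt
    have hout : q ∉ chioExt s t J := by
      intro hq
      apply h5
      rw [freeSet, Finset.mem_sdiff]
      refine ⟨hq, ?_⟩
      rw [coreSet, Finset.mem_insert, Finset.mem_union, borderI, Finset.mem_union]
      rintro (h | (h | h) | h)
      · exact h1 h
      · obtain ⟨i, hi, hq'⟩ := Finset.mem_image.mp h
        exact h2 ⟨((Prod.mk.injEq _ _ _ _).mp hq'.symm).2,
          (((Prod.mk.injEq _ _ _ _).mp hq'.symm).1 ▸ hi)⟩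
      · obtain ⟨j, hj, hq'⟩ := Finset.mem_image.mp h
        exact h3 ⟨((Prod.mk.injEq _ _ _ _).mp hq'.symm).1,
          (((Prod.mk.injEq _ _ _ _).mp hq'.symm).2 ▸ hj)⟩
      · exact h4 h
    rw [recon_out hIJ hout, hA1.2 q hout]
  right_inv := by
    rintro ⟨⟨x, hx⟩, g, ε⟩
    refine Prod.ext ?_ (Prod.ext ?_ ?_)
    · apply Subtype.ext
      funext v
      show extractX s t I (recon s t I J B x g ε.1) v = x v
      rw [extractX]
      split_ifs with hv
      · cases v with
        | inl i =>
          rw [Sum.elim_inl, recon_row hs ht hIJ hJ (mem_vertSet_inl.mp hv)]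
        | inr j =>
          rw [Sum.elim_inr, recon_col hs ht hIJ hJ (mem_vertSet_inr.mp hv)]
      · exact (hx.2.1 v hv).symm
    · funext q
      apply Subtype.ext
      show recon s t I J B x g ε.1 q.1 = (g q).1
      rw [recon_free q.2]
    · apply Subtype.ext
      show recon s t I J B x g ε.1 (s, t) = ε.1
      rw [recon_st]

end Grand


lemma card_SgnT : Nat.card SgnT = 2 := by
  rw [Nat.card_congr sgnEquivBool]
  simp [Nat.card_eq_fintype_card]

lemma chio_card_balanced {s t : ℕ} {I J : Finset (ℕ × ℕ)} {B : ℕ × ℕ → ℤ}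
    (hs : 2 ≤ s) (ht : 2 ≤ t) (hIJ : I ⊆ J) (hJ : J ⊆ mgrid s t)
    (hB : ∀ p ∈ I, B p = -1 ∨ B p = 0 ∨ B p = 1) (hbal : IsBalancedSG I B) :
    Set.ncard {A : ℕ × ℕ → ℤ | IsSignOn (chioExt s t J) A ∧ CondensesTo s t I A B}
      = 2 ^ betaZero I B * 2 ^ (freeSet s t I J).card * 2 := by
  rw [← Nat.card_coe_set_eq]
  have h1 : Nat.card ↥{A : ℕ × ℕ → ℤ | IsSignOn (chioExt s t J) A ∧ CondensesTo s t I A B}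
      = Nat.card ({x : ℕ ⊕ ℕ → ℤ // IsSol I B x} × ({q // q ∈ freeSet s t I J} → SgnT) × SgnT) :=
    Nat.card_congr (grandEquiv hs ht hIJ hJ hB)
  rw [h1, Nat.card_prod, Nat.card_prod, card_sol hB hbal, Nat.card_fun,
    card_SgnT, Nat.card_eq_finsetCard]
  ring

theorem chio_measure_value' (s t : ℕ) (hs : 2 ≤ s) (ht : 2 ≤ t)
    (I J : Finset (ℕ × ℕ)) (hIJ : I ⊆ J) (hJ : J ⊆ mgrid s t)
    (B : ℕ × ℕ → ℤ) (hB : ∀ p ∈ I, B p = -1 ∨ B p = 0 ∨ B p = 1) :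
    (IsBalancedSG I B →
      Pchio s t I J B = (2 : ℚ) ^ betaZero I B / 2 ^ (I.card + fZero I)) ∧
    (¬ IsBalancedSG I B → Pchio s t I J B = 0) ∧
    (0 < Pchio s t I J B ↔ IsBalancedSG I B) := by
  have hbalcase : IsBalancedSG I B →
      Pchio s t I J B = (2 : ℚ) ^ betaZero I B / 2 ^ (I.card + fZero I) := by
    intro hbal
    rw [Pchio, chio_card_balanced hs ht hIJ hJ hB hbal]
    have hF := card_freeSet hs ht hIJ hJ
    have hle := coreSet_le hs ht hIJ hJ
    rw [div_eq_div_iff (by positivity) (by positivity)]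
    push_cast
    rw [← pow_add, ← pow_add, ← pow_succ, ← pow_add]
    congr 1
    omega
  have hunbal : ¬ IsBalancedSG I B → Pchio s t I J B = 0 := by
    intro hbal
    have hempty : {A : ℕ × ℕ → ℤ | IsSignOn (chioExt s t J) A ∧ CondensesTo s t I A B} = ∅ := by
      rw [Set.eq_empty_iff_forall_notMem]
      rintro A ⟨hA1, hA2⟩
      exact hbal (bal_of_sol hB (extractX_sol hs ht hIJ hJ hB hA1 hA2))
    rw [Pchio, hempty, Set.ncard_empty]
    norm_num
  refine ⟨hbalcase, hunbal, ?_⟩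
  constructor
  · intro hpos
    by_contra hbal
    rw [hunbal hbal] at hpos
    exact lt_irrefl 0 hpos
  · intro hbal
    rw [hbalcase hbal]
    positivity


/-- **Value of the Chio measure on entry-specification events.** If `(X_B, σ_B)` is balanced
then `P_chio[E_B^J] = (1/2)^{|I| + f0(X_B) − β0(X_B)}` (written `2^{β0} / 2^{|I| + f0}`);
if it is not balanced then `P_chio[E_B^J] = 0`. In particular `P_chio[E_B^J] > 0` iff
`(X_B, σ_B)` is balanced. -/
theorem chio_measure_value (s t : ℕ) (hs : 2 ≤ s) (ht : 2 ≤ t)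
    (I J : Finset (ℕ × ℕ)) (hIJ : I ⊆ J) (hJ : J ⊆ mgrid s t)
    (B : ℕ × ℕ → ℤ) (hB : ∀ p ∈ I, B p = -1 ∨ B p = 0 ∨ B p = 1) :
    (IsBalancedSG I B →
      Pchio s t I J B = (2 : ℚ) ^ betaZero I B / 2 ^ (I.card + fZero I)) ∧
    (¬ IsBalancedSG I B → Pchio s t I J B = 0) ∧
    (0 < Pchio s t I J B ↔ IsBalancedSG I B) :=
  chio_measure_value' s t hs ht I J hIJ hJ B hB
end

section
/- Three-wise independence of Chio condensates (Theorem Ex3): Let n ≥ 2, let I ⊆ {1,…,n−1}² with |I| ≤ 3, and let B : I → {−1,0,+1}. Then |{A : {1,…,n}² → {−1,+1} : A(i,j)·A(n,n) − A(i,n)·A(n,j) = 2·B(i,j) for all (i,j) ∈ I}| = 2^{n² − |I| − |Supp(B)|}; equivalently, P_chio[E_B^{[n−1]²}] = P_lcf[E_B^{[n−1]²}] = (1/2)^{|I| + |Supp(B)|}. -/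
/-- The full grid `{1,…,n} × {1,…,n}` (the domain of the uncondensed sign matrices). -/
def fullGrid (n : ℕ) : Finset (ℕ × ℕ) := Finset.Icc 1 n ×ˢ Finset.Icc 1 n

/-- `P_chio[E_B^{[n−1]²}] = 2^{−n²} · |{A : {1,…,n}² → {±1} : A condenses to B}|`. -/
noncomputable def PchioN (n : ℕ) (I : Finset (ℕ × ℕ)) (B : ℕ × ℕ → ℤ) : ℚ :=
  (Set.ncard {A : ℕ × ℕ → ℤ | IsSignOn (fullGrid n) A ∧ CondensesTo n n I A B} : ℚ) /
    2 ^ (n ^ 2)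

/-- `P_lcf[E_B^{[n−1]²}] = (1/2)^{|I| + |Supp(B)|}` where `Supp(B) = {p ∈ I : B p ≠ 0}`. -/
def PlcfN (I : Finset (ℕ × ℕ)) (B : ℕ × ℕ → ℤ) : ℚ :=
  (1 / 2 : ℚ) ^ (I.card + (I.filter fun p => B p ≠ 0).card)

open scoped Classical

def sg (T : Finset (ℕ × ℕ)) (p : ℕ × ℕ) : ℤ := if p ∈ T then -1 else 1

lemma sg_mem {T : Finset (ℕ × ℕ)} {p} (h : p ∈ T) : sg T p = -1 := if_pos h
lemma sg_not_mem {T : Finset (ℕ × ℕ)} {p} (h : p ∉ T) : sg T p = 1 := if_neg h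
lemma sg_cases (T : Finset (ℕ × ℕ)) (p) : sg T p = 1 ∨ sg T p = -1 := by
  unfold sg; split <;> simp
lemma sg_eq_neg_one_iff {T : Finset (ℕ × ℕ)} {p} : sg T p = -1 ↔ p ∈ T := by
  unfold sg; split <;> simp_all

/-- Generic splitting lemma: if `P` only depends on the intersection with `E ⊆ G`,
then counting subsets of `G` satisfying `P` factors. -/
lemma split_count {α : Type*} [DecidableEq α] (G E : Finset α) (hE : E ⊆ G)
    (P : Finset α → Prop) [DecidablePred P]
    (hP : ∀ T, T ⊆ G → (P T ↔ P (T ∩ E))) :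
    (G.powerset.filter P).card = (E.powerset.filter P).card * 2 ^ ((G \ E).card) := by
  rw [← Finset.card_powerset, ← Finset.card_product]
  apply Finset.card_bij' (fun T _ => (T ∩ E, T ∩ (G \ E)))
    (fun UV _ => UV.1 ∪ UV.2)
  · intro T hT
    simp only [Finset.mem_filter, Finset.mem_powerset] at hT
    simp only [Finset.mem_product, Finset.mem_filter, Finset.mem_powerset]
    refine ⟨⟨Finset.inter_subset_right, ?_⟩, Finset.inter_subset_right⟩
    rw [← hP T hT.1]; exact hT.2
  · intro UV hUV
    simp only [Finset.mem_product, Finset.mem_filter, Finset.mem_powerset] at hUV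
    obtain ⟨⟨hU, hPU⟩, hV⟩ := hUV
    have hsub : UV.1 ∪ UV.2 ⊆ G := Finset.union_subset (hU.trans hE) (hV.trans (Finset.sdiff_subset))
    simp only [Finset.mem_filter, Finset.mem_powerset]
    refine ⟨hsub, ?_⟩
    rw [hP _ hsub]
    have : (UV.1 ∪ UV.2) ∩ E = UV.1 := by
      rw [Finset.union_inter_distrib_right]
      have h1 : UV.1 ∩ E = UV.1 := Finset.inter_eq_left.mpr hU
      have h2 : UV.2 ∩ E = ∅ := by
        rw [Finset.eq_empty_iff_forall_notMem]
        intro x hx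
        rcases Finset.mem_inter.mp hx with ⟨hx2, hxE⟩
        exact (Finset.mem_sdiff.mp (hV hx2)).2 hxE
      rw [h1, h2, Finset.union_empty]
    rw [this]; exact hPU
  · intro T hT
    simp only [Finset.mem_filter, Finset.mem_powerset] at hT
    rw [← Finset.inter_union_distrib_left, Finset.union_sdiff_of_subset hE,
      Finset.inter_eq_left.mpr hT.1]
  · intro UV hUV
    simp only [Finset.mem_product, Finset.mem_filter, Finset.mem_powerset] at hUV
    obtain ⟨⟨hU, _⟩, hV⟩ := hUV
    have h2 : UV.2 ∩ E = ∅ := by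
      rw [Finset.eq_empty_iff_forall_notMem]
      intro x hx
      rcases Finset.mem_inter.mp hx with ⟨hx2, hxE⟩
      exact (Finset.mem_sdiff.mp (hV hx2)).2 hxE
    have h1 : UV.1 ∩ (G \ E) = ∅ := by
      rw [Finset.eq_empty_iff_forall_notMem]
      intro x hx
      rcases Finset.mem_inter.mp hx with ⟨hx1, hxGE⟩
      exact (Finset.mem_sdiff.mp hxGE).2 (hU hx1)
    have e1 : (UV.1 ∪ UV.2) ∩ E = UV.1 := by
      rw [Finset.union_inter_distrib_right, Finset.inter_eq_left.mpr hU, h2, Finset.union_empty]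
    have e2 : (UV.1 ∪ UV.2) ∩ (G \ E) = UV.2 := by
      rw [Finset.union_inter_distrib_right, h1, Finset.inter_eq_left.mpr hV, Finset.empty_union]
    rw [e1, e2]

noncomputable def cnt (σ : ℕ × ℕ → Prop) (S : Finset (ℕ × ℕ)) (P Q : Finset ℕ) : ℕ :=
  ((P.powerset ×ˢ Q.powerset).filter
    (fun RC => ∀ e ∈ S, ((e.1 ∈ RC.1) ↔ (e.2 ∈ RC.2)) ↔ σ e)).card

lemma cnt_swap (σ : ℕ × ℕ → Prop) (S : Finset (ℕ × ℕ)) (P Q : Finset ℕ) :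
    cnt σ S P Q = cnt (σ ∘ Prod.swap) (S.image Prod.swap) Q P := by
  unfold cnt
  refine Finset.card_bij' (fun RC _ => (RC.2, RC.1)) (fun RC _ => (RC.2, RC.1))
    ?hi ?hj ?li ?ri
  case hi =>
    intro RC h
    simp only [Finset.mem_filter, Finset.mem_product, Finset.mem_powerset] at h ⊢
    refine ⟨⟨h.1.2, h.1.1⟩, ?_⟩
    intro e he
    simp only [Finset.mem_image] at he
    obtain ⟨f, hf, rfl⟩ := he
    have hf2 := h.2 f hf
    simp only [Prod.fst_swap, Prod.snd_swap, Function.comp_apply, Prod.swap_swap]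
    tauto
  case hj =>
    intro RC h
    simp only [Finset.mem_filter, Finset.mem_product, Finset.mem_powerset] at h ⊢
    refine ⟨⟨h.1.2, h.1.1⟩, ?_⟩
    intro e he
    have := h.2 e.swap (Finset.mem_image_of_mem _ he)
    simp only [Prod.fst_swap, Prod.snd_swap, Function.comp_apply, Prod.swap_swap] at this
    tauto
  case li => intro RC _; rfl
  case ri => intro RC _; rfl

/-- Leaf elimination: if `e.1` appears only in the edge `e`, remove `e` and the
vertex `e.1`. -/
lemma cnt_leaf (σ : ℕ × ℕ → Prop) (S : Finset (ℕ × ℕ)) (P Q : Finset ℕ)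
    (hP : S.image Prod.fst ⊆ P) (e : ℕ × ℕ) (he : e ∈ S)
    (hleaf : ∀ f ∈ S, f.1 = e.1 → f = e) :
    cnt σ S P Q = cnt σ (S.erase e) (P.erase e.1) Q := by
  unfold cnt
  refine Finset.card_bij' (fun RC _ => (RC.1.erase e.1, RC.2))
    (fun RC _ => (if ((e.2 ∈ RC.2) ↔ σ e) then insert e.1 RC.1 else RC.1, RC.2))
    ?hi ?hj ?li ?ri
  case hi =>
    intro RC h
    simp only [Finset.mem_filter, Finset.mem_product, Finset.mem_powerset] at h ⊢
    refine ⟨⟨Finset.erase_subset_erase _ h.1.1, h.1.2⟩, ?_⟩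
    intro f hf
    have hfS := Finset.mem_of_mem_erase hf
    have hfne : f.1 ≠ e.1 := fun hh => (Finset.ne_of_mem_erase hf) (hleaf f hfS hh)
    rw [Finset.mem_erase]
    have := h.2 f hfS
    tauto
  case hj =>
    intro RC h
    simp only [Finset.mem_filter, Finset.mem_product, Finset.mem_powerset] at h ⊢
    have he1P : e.1 ∈ P := hP (Finset.mem_image_of_mem _ he)
    have hR : RC.1 ⊆ P := h.1.1.trans (Finset.erase_subset _ _)
    have he1R : e.1 ∉ RC.1 := fun hh => (Finset.mem_erase.mp (h.1.1 hh)).1 rfl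
    constructor
    · constructor
      · split
        · exact Finset.insert_subset he1P hR
        · exact hR
      · exact h.1.2
    · intro f hf
      by_cases hfe : f = e
      · subst hfe
        split
        · simp only [Finset.mem_insert]
          tauto
        · tauto
      · have hfS : f ∈ S.erase e := Finset.mem_erase.mpr ⟨hfe, hf⟩
        have := h.2 f hfS
        have hfne : f.1 ≠ e.1 := fun hh => hfe (hleaf f hf hh)
        split
        · simp only [Finset.mem_insert]
          constructor
          · intro hiff; rw [← this]; tauto
          · intro hσ; rw [← this] at hσ; tauto
        · exact this
  case li =>
    intro RC h
    simp only [Finset.mem_filter, Finset.mem_product, Finset.mem_powerset] at h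
    have hcond := h.2 e he
    have : (if ((e.2 ∈ RC.2) ↔ σ e) then insert e.1 (RC.1.erase e.1) else RC.1.erase e.1) = RC.1 := by
      split
      · rename_i hc
        have he1R : e.1 ∈ RC.1 := by tauto
        rw [Finset.insert_erase he1R]
      · rename_i hc
        have he1R : e.1 ∉ RC.1 := by tauto
        rw [Finset.erase_eq_of_notMem he1R]
    exact Prod.ext this rfl
  case ri =>
    intro RC h
    simp only [Finset.mem_filter, Finset.mem_product, Finset.mem_powerset] at h
    have he1R : e.1 ∉ RC.1 := fun hh => (Finset.mem_erase.mp (h.1.1 hh)).1 rfl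
    have : (if ((e.2 ∈ RC.2) ↔ σ e) then insert e.1 RC.1 else RC.1).erase e.1 = RC.1 := by
      split
      · rw [Finset.erase_insert he1R]
      · rw [Finset.erase_eq_of_notMem he1R]
    exact Prod.ext this rfl

lemma exists_leaf (S : Finset (ℕ × ℕ)) (hne : S.Nonempty) (h3 : S.card ≤ 3) :
    (∃ e ∈ S, ∀ f ∈ S, f.1 = e.1 → f = e) ∨ (∃ e ∈ S, ∀ f ∈ S, f.2 = e.2 → f = e) := by
  interval_cases h : S.card
  · simp [Finset.card_eq_zero] at h; simp [h] at hne
  · obtain ⟨a, rfl⟩ := Finset.card_eq_one.mp h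
    left
    exact ⟨a, Finset.mem_singleton_self a, fun f hf _ => Finset.mem_singleton.mp hf⟩
  · obtain ⟨a, b, hab, rfl⟩ := Finset.card_eq_two.mp h
    by_cases h1 : a.1 = b.1
    · right
      have h2 : a.2 ≠ b.2 := fun h2 => hab (Prod.ext h1 h2)
      refine ⟨a, by simp, fun f hf hf2 => ?_⟩
      simp only [Finset.mem_insert, Finset.mem_singleton] at hf
      rcases hf with rfl | rfl
      · rfl
      · exact absurd hf2.symm h2
    · left
      refine ⟨a, by simp, fun f hf hf1 => ?_⟩
      simp only [Finset.mem_insert, Finset.mem_singleton] at hf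
      rcases hf with rfl | rfl
      · rfl
      · exact absurd hf1.symm h1
  · obtain ⟨a, b, c, hab, hac, hbc, rfl⟩ := Finset.card_eq_three.mp h
    by_cases hall : a.1 = b.1 ∧ a.1 = c.1
    · right
      have hab2 : a.2 ≠ b.2 := fun h2 => hab (Prod.ext hall.1 h2)
      have hac2 : a.2 ≠ c.2 := fun h2 => hac (Prod.ext hall.2 h2)
      refine ⟨a, by simp, fun f hf hf2 => ?_⟩
      simp only [Finset.mem_insert, Finset.mem_singleton] at hf
      rcases hf with rfl | rfl | rfl
      · rfl
      · exact absurd hf2.symm hab2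
      · exact absurd hf2.symm hac2
    · left
      -- some element's first coordinate differs from the other two, or is unique
      by_cases h1 : a.1 = b.1
      · -- then a.1 ≠ c.1 (else hall), so c is a leaf iff c.1 ∉ {a.1, b.1}
        have h2 : a.1 ≠ c.1 := fun hh => hall ⟨h1, hh⟩
        refine ⟨c, by simp, fun f hf hf1 => ?_⟩
        simp only [Finset.mem_insert, Finset.mem_singleton] at hf
        rcases hf with rfl | rfl | rfl
        · exact absurd hf1 h2
        · exact absurd (h1.trans hf1) h2
        · rfl
      · by_cases h2 : a.1 = c.1
        · -- a.1 = c.1 ≠ b.1 : b is a leaf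
          refine ⟨b, by simp, fun f hf hf1 => ?_⟩
          simp only [Finset.mem_insert, Finset.mem_singleton] at hf
          rcases hf with rfl | rfl | rfl
          · exact absurd hf1 h1
          · rfl
          · exact absurd hf1.symm (fun hh => h1 (h2.trans hh.symm))
        · by_cases h3 : b.1 = c.1
          · -- b.1 = c.1 ≠ a.1 : a is a leaf
            refine ⟨a, by simp, fun f hf hf1 => ?_⟩
            simp only [Finset.mem_insert, Finset.mem_singleton] at hf
            rcases hf with rfl | rfl | rfl
            · rfl
            · exact absurd hf1 (Ne.symm h1)
            · exact absurd hf1 (Ne.symm h2)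
          · -- all distinct : a is a leaf
            refine ⟨a, by simp, fun f hf hf1 => ?_⟩
            simp only [Finset.mem_insert, Finset.mem_singleton] at hf
            rcases hf with rfl | rfl | rfl
            · rfl
            · exact absurd hf1 (Ne.symm h1)
            · exact absurd hf1 (Ne.symm h2)

lemma cnt_count : ∀ (m : ℕ) (σ : ℕ × ℕ → Prop) (S : Finset (ℕ × ℕ)) (P Q : Finset ℕ),
    S.card = m → S.card ≤ 3 → S.image Prod.fst ⊆ P → S.image Prod.snd ⊆ Q →
    cnt σ S P Q * 2 ^ S.card = 2 ^ (P.card + Q.card) := by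
  intro m
  induction m with
  | zero =>
    intro σ S P Q hm _ _ _
    rw [Finset.card_eq_zero.mp hm]
    unfold cnt
    rw [Finset.filter_true_of_mem (fun x _ => by simp)]
    rw [Finset.card_product, Finset.card_powerset, Finset.card_powerset]
    simp [pow_add]
  | succ k IH =>
    intro σ S P Q hm h3 hP hQ
    have hne : S.Nonempty := Finset.card_pos.mp (by omega)
    rcases exists_leaf S hne h3 with ⟨e, he, hleaf⟩ | ⟨e, he, hleaf⟩
    · -- left leaf
      have hPe : e.1 ∈ P := hP (Finset.mem_image_of_mem _ he)
      have hcard : (S.erase e).card = k := by rw [Finset.card_erase_of_mem he]; omega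
      have hP' : (S.erase e).image Prod.fst ⊆ P.erase e.1 := by
        intro x hx
        simp only [Finset.mem_image] at hx
        obtain ⟨f, hf, rfl⟩ := hx
        refine Finset.mem_erase.mpr ⟨?_, hP (Finset.mem_image_of_mem _ (Finset.mem_of_mem_erase hf))⟩
        exact fun hh => (Finset.ne_of_mem_erase hf) (hleaf f (Finset.mem_of_mem_erase hf) hh)
      have hQ' : (S.erase e).image Prod.snd ⊆ Q :=
        (Finset.image_subset_image (Finset.erase_subset _ _)).trans hQ
      have hIH := IH σ (S.erase e) (P.erase e.1) Q hcard (by omega) hP' hQ'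
      rw [cnt_leaf σ S P Q hP e he hleaf, hm, pow_succ, ← mul_assoc, hcard] at *
      rw [hIH, Finset.card_erase_of_mem hPe, ← pow_succ]
      congr 1
      have : 1 ≤ P.card := Finset.card_pos.mpr ⟨e.1, hPe⟩
      omega
    · -- right leaf: swap
      have hQe : e.2 ∈ Q := hQ (Finset.mem_image_of_mem _ he)
      have hswapinj : Function.Injective (Prod.swap : ℕ × ℕ → ℕ × ℕ) := Prod.swap_injective
      have heS' : e.swap ∈ S.image Prod.swap := Finset.mem_image_of_mem _ he
      have hP'' : (S.image Prod.swap).image Prod.fst ⊆ Q := by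
        intro x hx
        simp only [Finset.mem_image] at hx
        obtain ⟨f, ⟨g, hg, rfl⟩, rfl⟩ := hx
        exact hQ (Finset.mem_image_of_mem _ hg)
      have hleaf' : ∀ f ∈ S.image Prod.swap, f.1 = e.swap.1 → f = e.swap := by
        intro f hf hf1
        simp only [Finset.mem_image] at hf
        obtain ⟨g, hg, rfl⟩ := hf
        have := hleaf g hg hf1
        rw [this]
      have step1 := cnt_swap σ S P Q
      have step2 := cnt_leaf (σ ∘ Prod.swap) (S.image Prod.swap) Q P hP'' e.swap heS' hleaf'
      have himg : (S.image Prod.swap).erase e.swap = (S.erase e).image Prod.swap :=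
        (Finset.image_erase hswapinj S e).symm
      have step3 := cnt_swap (σ ∘ Prod.swap) ((S.erase e).image Prod.swap) (Q.erase e.swap.1) P
      have himg2 : ((S.erase e).image Prod.swap).image Prod.swap = S.erase e := by
        rw [Finset.image_image]
        simp
      have hσ : (σ ∘ Prod.swap) ∘ Prod.swap = σ := by
        funext x; simp
      rw [himg] at step2
      rw [himg2, hσ] at step3
      have key : cnt σ S P Q = cnt σ (S.erase e) P (Q.erase e.swap.1) := by
        rw [step1, step2, step3]
      have hcard : (S.erase e).card = k := by rw [Finset.card_erase_of_mem he]; omega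
      have hQ' : (S.erase e).image Prod.snd ⊆ Q.erase e.2 := by
        intro x hx
        simp only [Finset.mem_image] at hx
        obtain ⟨f, hf, rfl⟩ := hx
        refine Finset.mem_erase.mpr ⟨?_, hQ (Finset.mem_image_of_mem _ (Finset.mem_of_mem_erase hf))⟩
        exact fun hh => (Finset.ne_of_mem_erase hf) (hleaf f (Finset.mem_of_mem_erase hf) hh)
      have hP' : (S.erase e).image Prod.fst ⊆ P :=
        (Finset.image_subset_image (Finset.erase_subset _ _)).trans hP
      have hIH := IH σ (S.erase e) P (Q.erase e.2) hcard (by omega) hP' hQ'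
      rw [hcard] at hIH
      simp only [Prod.fst_swap] at key
      rw [key, hm, pow_succ, ← mul_assoc]
      rw [hIH, Finset.card_erase_of_mem hQe, ← pow_succ]
      congr 1
      have : 1 ≤ Q.card := Finset.card_pos.mpr ⟨e.2, hQe⟩
      omega

lemma sg_congr {T T' : Finset (ℕ × ℕ)} {q} (h : q ∈ T ↔ q ∈ T') : sg T q = sg T' q := by
  unfold sg
  by_cases hq : q ∈ T
  · rw [if_pos hq, if_pos (h.mp hq)]
  · rw [if_neg hq, if_neg (fun hh => hq (h.mpr hh))]

/-- sign bashing A : from the Chio equation derive the value of `a` and the row-col constraint. -/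
lemma signA {a e r c b : ℤ} (ha : a = 1 ∨ a = -1) (he : e = 1 ∨ e = -1)
    (hr : r = 1 ∨ r = -1) (hc : c = 1 ∨ c = -1) (hb : b = -1 ∨ b = 0 ∨ b = 1)
    (h : a * e - r * c = 2 * b) :
    a = e * (r * c + 2 * b) ∧ (b ≠ 0 → r * c = -b) := by
  rcases ha with rfl | rfl <;> rcases he with rfl | rfl <;> rcases hr with rfl | rfl <;>
    rcases hc with rfl | rfl <;> rcases hb with rfl | rfl | rfl <;> (try norm_num at h) <;> norm_num

/-- sign bashing B : reconstruction of a valid `a` from the row-col data. -/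
lemma signB {e r c b : ℤ} (he : e = 1 ∨ e = -1) (hr : r = 1 ∨ r = -1) (hc : c = 1 ∨ c = -1)
    (hb : b = -1 ∨ b = 0 ∨ b = 1) (hrc : b = 0 ∨ r * c = -b) :
    (e * (r * c + 2 * b) = 1 ∨ e * (r * c + 2 * b) = -1) ∧
      (e * (r * c + 2 * b)) * e - r * c = 2 * b := by
  rcases he with rfl | rfl <;> rcases hr with rfl | rfl <;> rcases hc with rfl | rfl <;>
    rcases hb with rfl | rfl | rfl <;> rcases hrc with h | h <;> (try norm_num at h) <;> norm_num

/-- sign bashing C : translation between `±1` products and iff of memberships. -/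
lemma signC {r c b : ℤ} (hr : r = 1 ∨ r = -1) (hc : c = 1 ∨ c = -1) (hb : b = -1 ∨ b = 1) :
    (r * c = -b) ↔ (((r = -1) ↔ (c = -1)) ↔ b = -1) := by
  rcases hr with rfl | rfl <;> rcases hc with rfl | rfl <;> rcases hb with rfl | rfl <;>
    norm_num

section Facts

variable {n : ℕ} {I : Finset (ℕ × ℕ)}

lemma mem_I_facts (hn : 2 ≤ n) (hI : I ⊆ mgrid n n) {p : ℕ × ℕ} (hp : p ∈ I) :
    p.1 ≠ n ∧ p.2 ≠ n ∧ 1 ≤ p.1 ∧ p.1 ≤ n ∧ 1 ≤ p.2 ∧ p.2 ≤ n := by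
  have := hI hp
  simp only [mgrid, Finset.mem_product, Finset.mem_Icc] at this
  omega

lemma chio_mem₁ {p : ℕ × ℕ} (hp : p ∈ I) : p ∈ chioExt n n I := by
  simp only [chioExt, Finset.mem_insert, Finset.mem_union]
  tauto

lemma chio_mem₂ {p : ℕ × ℕ} (hp : p ∈ I) : (p.1, n) ∈ chioExt n n I := by
  simp only [chioExt, Finset.mem_insert, Finset.mem_union, Finset.mem_image]
  right; left; left
  exact ⟨p.1, ⟨p, hp, rfl⟩, rfl⟩

lemma chio_mem₃ {p : ℕ × ℕ} (hp : p ∈ I) : (n, p.2) ∈ chioExt n n I := by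
  simp only [chioExt, Finset.mem_insert, Finset.mem_union, Finset.mem_image]
  right; left; right
  exact ⟨p.2, ⟨p, hp, rfl⟩, rfl⟩

lemma chio_mem₄ : (n, n) ∈ chioExt n n I := by
  simp [chioExt]

lemma chio_subset (hn : 2 ≤ n) (hI : I ⊆ mgrid n n) : chioExt n n I ⊆ fullGrid n := by
  intro q hq
  simp only [chioExt, Finset.mem_insert, Finset.mem_union, Finset.mem_image] at hq
  simp only [fullGrid, Finset.mem_product, Finset.mem_Icc]
  rcases hq with rfl | ⟨⟨i, ⟨p, hp, rfl⟩, rfl⟩ | ⟨j, ⟨p, hp, rfl⟩, rfl⟩⟩ | hq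
  · omega
  · have := mem_I_facts hn hI hp; simp only; omega
  · have := mem_I_facts hn hI hp; simp only; omega
  · have := mem_I_facts hn hI hq; omega

lemma row_not_mem (hn : 2 ≤ n) (hI : I ⊆ mgrid n n) (i : ℕ) : (i, n) ∉ I := by
  intro h
  exact (mem_I_facts hn hI h).2.1 rfl

lemma col_not_mem (hn : 2 ≤ n) (hI : I ⊆ mgrid n n) (j : ℕ) : (n, j) ∉ I := by
  intro h
  exact (mem_I_facts hn hI h).1 rfl

end Facts

section Steps

variable (n : ℕ) (I : Finset (ℕ × ℕ)) (B : ℕ × ℕ → ℤ)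

lemma stepA :
    Set.ncard {A : ℕ × ℕ → ℤ | IsSignOn (fullGrid n) A ∧ CondensesTo n n I A B} =
      ((fullGrid n).powerset.filter (fun T => CondensesTo n n I (sg T) B)).card := by
  have himg : {A : ℕ × ℕ → ℤ | IsSignOn (fullGrid n) A ∧ CondensesTo n n I A B} =
      sg '' ((fullGrid n).powerset.filter (fun T => CondensesTo n n I (sg T) B) : Finset _) := by
    ext A
    simp only [Set.mem_setOf_eq, Set.mem_image, Finset.mem_coe, Finset.mem_filter,
      Finset.mem_powerset]
    constructor
    · rintro ⟨⟨hs1, hs2⟩, hc⟩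
      refine ⟨(fullGrid n).filter (fun p => A p = -1), ⟨Finset.filter_subset _ _, ?_⟩, ?_⟩
      · have : sg ((fullGrid n).filter (fun p => A p = -1)) = A := by
          funext q
          unfold sg
          split
          · rename_i h; exact ((Finset.mem_filter.mp h).2).symm
          · rename_i h
            by_cases hq : q ∈ fullGrid n
            · rcases hs1 q hq with h1 | h1
              · exact h1.symm
              · exact absurd (Finset.mem_filter.mpr ⟨hq, h1⟩) h
            · exact (hs2 q hq).symm
        rw [this]; exact hc
      · funext q
        unfold sg
        split
        · rename_i h; exact ((Finset.mem_filter.mp h).2).symm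
        · rename_i h
          by_cases hq : q ∈ fullGrid n
          · rcases hs1 q hq with h1 | h1
            · exact h1.symm
            · exact absurd (Finset.mem_filter.mpr ⟨hq, h1⟩) h
          · exact (hs2 q hq).symm
    · rintro ⟨T, ⟨hT, hc⟩, rfl⟩
      refine ⟨⟨fun p _ => ?_, fun p hp => ?_⟩, hc⟩
      · rcases sg_cases T p with h | h <;> tauto
      · exact sg_not_mem (fun hh => hp (hT hh))
  rw [himg]
  rw [Set.ncard_image_of_injOn, Set.ncard_coe_finset]
  intro T hT T' hT' hEq
  simp only [Finset.mem_coe, Finset.mem_filter, Finset.mem_powerset] at hT hT'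
  ext q
  constructor
  · intro hq
    rw [← sg_eq_neg_one_iff, ← hEq]
    exact sg_mem hq
  · intro hq
    rw [← sg_eq_neg_one_iff, hEq]
    exact sg_mem hq

variable {n I} (hn : 2 ≤ n) (hI : I ⊆ mgrid n n)

include hn hI in
lemma stepB :
    ((fullGrid n).powerset.filter (fun T => CondensesTo n n I (sg T) B)).card =
      ((chioExt n n I).powerset.filter (fun T => CondensesTo n n I (sg T) B)).card *
        2 ^ ((fullGrid n \ chioExt n n I).card) := by
  apply split_count _ _ (chio_subset hn hI)
  intro T hT
  unfold CondensesTo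
  apply forall₂_congr
  intro p hp
  have hs : ∀ q, q ∈ chioExt n n I → sg T q = sg (T ∩ chioExt n n I) q := by
    intro q hq
    apply sg_congr
    simp only [Finset.mem_inter]
    tauto
  rw [hs p (chio_mem₁ hp), hs _ (chio_mem₂ hp), hs _ (chio_mem₃ hp), hs _ chio_mem₄]

variable (hB : ∀ p ∈ I, B p = -1 ∨ B p = 0 ∨ B p = 1)

include hn hI hB in
lemma stepC :
    ((chioExt n n I).powerset.filter (fun T => CondensesTo n n I (sg T) B)).card =
      ((chioExt n n I \ I).powerset.filter
        (fun W => ∀ p ∈ I, B p ≠ 0 → sg W (p.1, n) * sg W (n, p.2) = -(B p))).card := by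
  refine Finset.card_bij' (fun U _ => U \ I)
    (fun W _ => W ∪ I.filter
      (fun p => sg W (n, n) * (sg W (p.1, n) * sg W (n, p.2) + 2 * B p) = -1)) ?hi ?hj ?li ?ri
  case hi =>
    intro U hU
    simp only [Finset.mem_filter, Finset.mem_powerset] at hU ⊢
    obtain ⟨hUE, hcond⟩ := hU
    refine ⟨Finset.sdiff_subset_sdiff hUE (Finset.Subset.refl I), ?_⟩
    intro p hp hbp
    have e1 : sg (U \ I) (p.1, n) = sg U (p.1, n) :=
      sg_congr (by simp [Finset.mem_sdiff, row_not_mem hn hI])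
    have e2 : sg (U \ I) (n, p.2) = sg U (n, p.2) :=
      sg_congr (by simp [Finset.mem_sdiff, col_not_mem hn hI])
    rw [e1, e2]
    exact (signA (sg_cases U p) (sg_cases U (n, n)) (sg_cases U (p.1, n)) (sg_cases U (n, p.2))
      (hB p hp) (hcond p hp)).2 hbp
  case hj =>
    intro W hW
    simp only [Finset.mem_filter, Finset.mem_powerset] at hW ⊢
    obtain ⟨hWE, hcompat⟩ := hW
    have hWI : ∀ q ∈ W, q ∉ I := fun q hq => (Finset.mem_sdiff.mp (hWE hq)).2
    set D := I.filter
      (fun p => sg W (n, n) * (sg W (p.1, n) * sg W (n, p.2) + 2 * B p) = -1) with hD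
    have hDI : D ⊆ I := Finset.filter_subset _ _
    constructor
    · exact Finset.union_subset (hWE.trans (Finset.sdiff_subset))
        (fun q hq => chio_mem₁ (hDI hq))
    · intro p hp
      have e1 : sg (W ∪ D) (p.1, n) = sg W (p.1, n) :=
        sg_congr (by simp only [Finset.mem_union]
                     exact or_iff_left (fun h => row_not_mem hn hI p.1 (hDI h)))
      have e2 : sg (W ∪ D) (n, p.2) = sg W (n, p.2) :=
        sg_congr (by simp only [Finset.mem_union]
                     exact or_iff_left (fun h => col_not_mem hn hI p.2 (hDI h)))
      have e3 : sg (W ∪ D) (n, n) = sg W (n, n) :=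
        sg_congr (by simp only [Finset.mem_union]
                     exact or_iff_left (fun h => col_not_mem hn hI n (hDI h)))
      have hrc : B p = 0 ∨ sg W (p.1, n) * sg W (n, p.2) = -(B p) := by
        by_cases hb : B p = 0
        · exact Or.inl hb
        · exact Or.inr (hcompat p hp hb)
      have hsB := signB (sg_cases W (n, n)) (sg_cases W (p.1, n)) (sg_cases W (n, p.2))
        (hB p hp) hrc
      have hmem : p ∈ W ∪ D ↔
          sg W (n, n) * (sg W (p.1, n) * sg W (n, p.2) + 2 * B p) = -1 := by
        simp only [Finset.mem_union, hD, Finset.mem_filter]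
        constructor
        · rintro (h | h)
          · exact absurd hp (hWI p h)
          · exact h.2
        · intro h; exact Or.inr ⟨hp, h⟩
      have ha : sg (W ∪ D) p = sg W (n, n) * (sg W (p.1, n) * sg W (n, p.2) + 2 * B p) := by
        by_cases hc : sg W (n, n) * (sg W (p.1, n) * sg W (n, p.2) + 2 * B p) = -1
        · rw [sg_mem (hmem.mpr hc), hc]
        · have h1 : sg W (n, n) * (sg W (p.1, n) * sg W (n, p.2) + 2 * B p) = 1 := by
            rcases hsB.1 with h | h
            · exact h
            · exact absurd h hc
          rw [sg_not_mem (fun hh => hc (hmem.mp hh)), h1]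
      rw [ha, e1, e2, e3]
      exact hsB.2
  case li =>
    intro U hU
    simp only [Finset.mem_filter, Finset.mem_powerset] at hU
    obtain ⟨hUE, hcond⟩ := hU
    ext q
    simp only [Finset.mem_union, Finset.mem_sdiff, Finset.mem_filter]
    by_cases hqI : q ∈ I
    · have e1 : sg (U \ I) (q.1, n) = sg U (q.1, n) :=
        sg_congr (by simp [Finset.mem_sdiff, row_not_mem hn hI])
      have e2 : sg (U \ I) (n, q.2) = sg U (n, q.2) :=
        sg_congr (by simp [Finset.mem_sdiff, col_not_mem hn hI])
      have e3 : sg (U \ I) (n, n) = sg U (n, n) :=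
        sg_congr (by simp [Finset.mem_sdiff, col_not_mem hn hI])
      have hA := (signA (sg_cases U q) (sg_cases U (n, n)) (sg_cases U (q.1, n))
        (sg_cases U (n, q.2)) (hB q hqI) (hcond q hqI)).1
      constructor
      · rintro (⟨_, h⟩ | ⟨_, h⟩)
        · exact absurd hqI h
        · rw [e1, e2, e3] at h
          rw [← sg_eq_neg_one_iff, hA]
          exact h
      · intro hq
        right
        refine ⟨hqI, ?_⟩
        rw [e1, e2, e3, ← hA]
        exact sg_mem hq
    · constructor
      · rintro (⟨h, _⟩ | ⟨h, _⟩)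
        · exact h
        · exact absurd h hqI
      · intro hq
        exact Or.inl ⟨hq, hqI⟩
  case ri =>
    intro W hW
    simp only [Finset.mem_filter, Finset.mem_powerset] at hW
    obtain ⟨hWE, _⟩ := hW
    ext q
    simp only [Finset.mem_sdiff, Finset.mem_union, Finset.mem_filter]
    constructor
    · rintro ⟨h | h, hqI⟩
      · exact h
      · exact absurd h.1 hqI
    · intro hq
      exact ⟨Or.inl hq, (Finset.mem_sdiff.mp (hWE hq)).2⟩

end Steps

section Steps2

variable {n : ℕ} {I : Finset (ℕ × ℕ)} (B : ℕ × ℕ → ℤ) (hn : 2 ≤ n) (hI : I ⊆ mgrid n n)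

-- abbreviations (local notation via defs with explicit args)
-- rows and cols
include hn hI in
lemma mem_proj1_ne (i : ℕ) (hi : i ∈ I.image Prod.fst) : i ≠ n := by
  simp only [Finset.mem_image] at hi
  obtain ⟨p, hp, rfl⟩ := hi
  exact (mem_I_facts hn hI hp).1

include hn hI in
lemma mem_proj2_ne (j : ℕ) (hj : j ∈ I.image Prod.snd) : j ≠ n := by
  simp only [Finset.mem_image] at hj
  obtain ⟨p, hp, rfl⟩ := hj
  exact (mem_I_facts hn hI hp).2.1

include hn hI in
lemma E0_eq :
    chioExt n n I \ I = insert (n, n)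
      (((I.image Prod.fst).image fun i => (i, n)) ∪
        ((I.image Prod.snd).image fun j => (n, j))) := by
  ext q
  simp only [chioExt, Finset.mem_sdiff, Finset.mem_insert, Finset.mem_union, Finset.mem_image]
  constructor
  · rintro ⟨rfl | (h | h) | h, hqI⟩
    · exact Or.inl rfl
    · exact Or.inr (Or.inl h)
    · exact Or.inr (Or.inr h)
    · exact absurd h hqI
  · rintro (rfl | ⟨i, hi, rfl⟩ | ⟨j, hj, rfl⟩)
    · exact ⟨Or.inl rfl, col_not_mem hn hI n⟩
    · exact ⟨Or.inr (Or.inl (Or.inl ⟨i, hi, rfl⟩)), row_not_mem hn hI i⟩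
    · exact ⟨Or.inr (Or.inl (Or.inr ⟨j, hj, rfl⟩)), col_not_mem hn hI j⟩

include hn hI in
lemma nn_not_mem_V :
    (n, n) ∉ ((I.image Prod.fst).image fun i => (i, n)) ∪
      ((I.image Prod.snd).image fun j => (n, j)) := by
  intro h
  rcases Finset.mem_union.mp h with h | h
  · obtain ⟨i, hi, hh⟩ := Finset.mem_image.mp h
    exact mem_proj1_ne hn hI i hi (congrArg Prod.fst hh)
  · obtain ⟨j, hj, hh⟩ := Finset.mem_image.mp h
    exact mem_proj2_ne hn hI j hj (congrArg Prod.snd hh)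

include hn hI in
lemma stepD :
    ((chioExt n n I \ I).powerset.filter
      (fun W => ∀ p ∈ I, B p ≠ 0 → sg W (p.1, n) * sg W (n, p.2) = -(B p))).card =
    ((((I.image Prod.fst).image fun i => (i, n)) ∪
        ((I.image Prod.snd).image fun j => (n, j))).powerset.filter
      (fun W => ∀ p ∈ I, B p ≠ 0 → sg W (p.1, n) * sg W (n, p.2) = -(B p))).card * 2 := by
  set V := ((I.image Prod.fst).image fun i => (i, n)) ∪
      ((I.image Prod.snd).image fun j => (n, j)) with hV
  have hVE : V ⊆ chioExt n n I \ I := by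
    rw [E0_eq hn hI]
    exact Finset.subset_insert _ _
  have hsd : (chioExt n n I \ I) \ V = ({((n : ℕ), (n : ℕ))} : Finset (ℕ × ℕ)) := by
    rw [E0_eq hn hI]
    rw [Finset.insert_sdiff_of_notMem _ (nn_not_mem_V hn hI)]
    rw [Finset.sdiff_self]
    rfl
  have := split_count (chioExt n n I \ I) V hVE
    (fun W => ∀ p ∈ I, B p ≠ 0 → sg W (p.1, n) * sg W (n, p.2) = -(B p)) ?_
  · rw [this, hsd]
    simp
  · intro T _
    apply forall₂_congr
    intro p hp
    have h1 : sg T (p.1, n) = sg (T ∩ V) (p.1, n) := by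
      apply sg_congr
      constructor
      · intro h
        exact Finset.mem_inter.mpr ⟨h, Finset.mem_union_left _
          (Finset.mem_image_of_mem _ (Finset.mem_image_of_mem _ hp))⟩
      · intro h
        exact (Finset.mem_inter.mp h).1
    have h2 : sg T (n, p.2) = sg (T ∩ V) (n, p.2) := by
      apply sg_congr
      constructor
      · intro h
        exact Finset.mem_inter.mpr ⟨h, Finset.mem_union_right _
          (Finset.mem_image_of_mem _ (Finset.mem_image_of_mem _ hp))⟩
      · intro h
        exact (Finset.mem_inter.mp h).1
    rw [h1, h2]

variable (hB : ∀ p ∈ I, B p = -1 ∨ B p = 0 ∨ B p = 1)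

include hn hI hB in
lemma stepE :
    ((((I.image Prod.fst).image fun i => (i, n)) ∪
        ((I.image Prod.snd).image fun j => (n, j))).powerset.filter
      (fun W => ∀ p ∈ I, B p ≠ 0 → sg W (p.1, n) * sg W (n, p.2) = -(B p))).card =
    cnt (fun p => B p = -1) (I.filter fun p => B p ≠ 0) (I.image Prod.fst)
      (I.image Prod.snd) := by
  unfold cnt
  refine Finset.card_bij'
    (fun W _ => ((I.image Prod.fst).filter (fun i => (i, n) ∈ W),
                 (I.image Prod.snd).filter (fun j => (n, j) ∈ W)))
    (fun RC _ => (RC.1.image fun i => (i, n)) ∪ (RC.2.image fun j => (n, j)))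
    ?hi ?hj ?li ?ri
  case hi =>
    intro W hW
    rw [Finset.mem_filter, Finset.mem_powerset] at hW
    obtain ⟨hWV, hcompat⟩ := hW
    simp only [Finset.mem_filter, Finset.mem_product, Finset.mem_powerset]
    refine ⟨⟨Finset.filter_subset _ _, Finset.filter_subset _ _⟩, ?_⟩
    intro e he
    obtain ⟨heI, hbe⟩ := he
    have hb : B e = -1 ∨ B e = 1 := by
      rcases hB e heI with h | h | h
      · exact Or.inl h
      · exact absurd h hbe
      · exact Or.inr h
    have key := (signC (sg_cases W (e.1, n)) (sg_cases W (n, e.2)) hb).mp (hcompat e heI hbe)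
    have m1 : (e.1 ∈ I.image Prod.fst ∧ (e.1, n) ∈ W) ↔ (e.1, n) ∈ W :=
      and_iff_right (Finset.mem_image_of_mem _ heI)
    have m2 : (e.2 ∈ I.image Prod.snd ∧ (n, e.2) ∈ W) ↔ (n, e.2) ∈ W :=
      and_iff_right (Finset.mem_image_of_mem _ heI)
    rw [m1, m2, ← sg_eq_neg_one_iff, ← sg_eq_neg_one_iff]
    exact key
  case hj =>
    intro RC hRC
    simp only [Finset.mem_filter] at hRC
    obtain ⟨hmem, hcond⟩ := hRC
    rw [Finset.mem_product, Finset.mem_powerset, Finset.mem_powerset] at hmem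
    rw [Finset.mem_filter, Finset.mem_powerset]
    constructor
    · exact Finset.union_subset_union (Finset.image_subset_image hmem.1)
        (Finset.image_subset_image hmem.2)
    · intro p hp hbp
      have hp1n : p.1 ≠ n := (mem_I_facts hn hI hp).1
      have hp2n : p.2 ≠ n := (mem_I_facts hn hI hp).2.1
      have m1 : (p.1, n) ∈ (RC.1.image fun i => (i, n)) ∪ (RC.2.image fun j => (n, j)) ↔
          p.1 ∈ RC.1 := by
        simp only [Finset.mem_union, Finset.mem_image]
        constructor
        · rintro (⟨i, hi, h⟩ | ⟨j, hj, h⟩)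
          · have hii : i = p.1 := congrArg Prod.fst h
            exact hii ▸ hi
          · exact absurd (congrArg Prod.fst h).symm hp1n
        · intro h; exact Or.inl ⟨p.1, h, rfl⟩
      have m2 : (n, p.2) ∈ (RC.1.image fun i => (i, n)) ∪ (RC.2.image fun j => (n, j)) ↔
          p.2 ∈ RC.2 := by
        simp only [Finset.mem_union, Finset.mem_image]
        constructor
        · rintro (⟨i, hi, h⟩ | ⟨j, hj, h⟩)
          · exact absurd (congrArg Prod.snd h) (Ne.symm hp2n)
          · have hjj : j = p.2 := congrArg Prod.snd h
            exact hjj ▸ hj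
        · intro h; exact Or.inr ⟨p.2, h, rfl⟩
      have hb : B p = -1 ∨ B p = 1 := by
        rcases hB p hp with h | h | h
        · exact Or.inl h
        · exact absurd h hbp
        · exact Or.inr h
      rw [signC (sg_cases _ (p.1, n)) (sg_cases _ (n, p.2)) hb]
      rw [sg_eq_neg_one_iff, sg_eq_neg_one_iff, m1, m2]
      exact hcond p ⟨hp, hbp⟩
  case li =>
    intro W hW
    simp only [Finset.mem_filter, Finset.mem_powerset] at hW
    obtain ⟨hWV, _⟩ := hW
    ext q
    simp only [Finset.mem_union, Finset.mem_image, Finset.mem_filter]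
    constructor
    · rintro (⟨i, ⟨⟨hi, hiW⟩, rfl⟩⟩ | ⟨j, ⟨⟨hj, hjW⟩, rfl⟩⟩)
      · exact hiW
      · exact hjW
    · intro hq
      have hqV := hWV hq
      simp only [Finset.mem_union, Finset.mem_image] at hqV
      rcases hqV with ⟨i, hi, rfl⟩ | ⟨j, hj, rfl⟩
      · exact Or.inl ⟨i, ⟨⟨hi, hq⟩, rfl⟩⟩
      · exact Or.inr ⟨j, ⟨⟨hj, hq⟩, rfl⟩⟩
  case ri =>
    intro RC hRC
    simp only [Finset.mem_filter] at hRC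
    obtain ⟨hmem, _⟩ := hRC
    rw [Finset.mem_product, Finset.mem_powerset, Finset.mem_powerset] at hmem
    have e1 : (I.image Prod.fst).filter
        (fun i => (i, n) ∈ (RC.1.image fun i => (i, n)) ∪ (RC.2.image fun j => (n, j))) =
        RC.1 := by
      ext i
      rw [Finset.mem_filter]
      constructor
      · rintro ⟨hi, hiW⟩
        rcases Finset.mem_union.mp hiW with h | h
        · obtain ⟨i', hi', hh⟩ := Finset.mem_image.mp h
          have hii : i' = i := congrArg Prod.fst hh
          exact hii ▸ hi'
        · obtain ⟨j', hj', hh⟩ := Finset.mem_image.mp h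
          exact absurd (congrArg Prod.fst hh).symm (mem_proj1_ne hn hI i hi)
      · intro hi
        exact ⟨hmem.1 hi, Finset.mem_union_left _ (Finset.mem_image_of_mem _ hi)⟩
    have e2 : (I.image Prod.snd).filter
        (fun j => (n, j) ∈ (RC.1.image fun i => (i, n)) ∪ (RC.2.image fun j => (n, j))) =
        RC.2 := by
      ext j
      rw [Finset.mem_filter]
      constructor
      · rintro ⟨hj, hjW⟩
        rcases Finset.mem_union.mp hjW with h | h
        · obtain ⟨i', hi', hh⟩ := Finset.mem_image.mp h
          exact absurd (congrArg Prod.snd hh) (Ne.symm (mem_proj2_ne hn hI j hj))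
        · obtain ⟨j', hj', hh⟩ := Finset.mem_image.mp h
          have hjj : j' = j := congrArg Prod.snd hh
          exact hjj ▸ hj'
      · intro hj
        exact ⟨hmem.2 hj, Finset.mem_union_right _ (Finset.mem_image_of_mem _ hj)⟩
    try dsimp only
    rw [e1, e2]

end Steps2

section Final

variable {n : ℕ} {I : Finset (ℕ × ℕ)} (B : ℕ × ℕ → ℤ) (hn : 2 ≤ n) (hI : I ⊆ mgrid n n)

lemma card_fullGrid : (fullGrid n).card = n ^ 2 := by
  rw [fullGrid, Finset.card_product, Nat.card_Icc]
  have : n + 1 - 1 = n := by omega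
  rw [this, ← pow_two]

include hn hI in
lemma card_chioExt : (chioExt n n I).card =
    1 + ((I.image Prod.fst).card + (I.image Prod.snd).card + I.card) := by
  have hinj1 : Function.Injective (fun i : ℕ => (i, n)) := fun a b h => congrArg Prod.fst h
  have hinj2 : Function.Injective (fun j : ℕ => (n, j)) := fun a b h => congrArg Prod.snd h
  have hd12 : Disjoint ((I.image Prod.fst).image fun i => (i, n))
      ((I.image Prod.snd).image fun j => (n, j)) := by
    rw [Finset.disjoint_left]
    intro q hq1 hq2
    obtain ⟨i, hi, rfl⟩ := Finset.mem_image.mp hq1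
    obtain ⟨j, hj, hh⟩ := Finset.mem_image.mp hq2
    exact mem_proj1_ne hn hI i hi (congrArg Prod.fst hh).symm
  have hdI : Disjoint (((I.image Prod.fst).image fun i => (i, n)) ∪
      ((I.image Prod.snd).image fun j => (n, j))) I := by
    rw [Finset.disjoint_left]
    intro q hq1 hq2
    rcases Finset.mem_union.mp hq1 with h | h
    · obtain ⟨i, hi, rfl⟩ := Finset.mem_image.mp h
      exact row_not_mem hn hI i hq2
    · obtain ⟨j, hj, rfl⟩ := Finset.mem_image.mp h
      exact col_not_mem hn hI j hq2
  have hnn : (n, n) ∉ (((I.image Prod.fst).image fun i => (i, n)) ∪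
      ((I.image Prod.snd).image fun j => (n, j))) ∪ I := by
    intro h
    rcases Finset.mem_union.mp h with h | h
    · rcases Finset.mem_union.mp h with h | h
      · obtain ⟨i, hi, hh⟩ := Finset.mem_image.mp h
        exact mem_proj1_ne hn hI i hi (congrArg Prod.fst hh)
      · obtain ⟨j, hj, hh⟩ := Finset.mem_image.mp h
        exact mem_proj2_ne hn hI j hj (congrArg Prod.snd hh)
    · exact col_not_mem hn hI n h
  rw [chioExt]
  rw [Finset.card_insert_of_notMem hnn, Finset.card_union_of_disjoint hdI,
    Finset.card_union_of_disjoint hd12, Finset.card_image_of_injective _ hinj1,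
    Finset.card_image_of_injective _ hinj2]
  omega

include hn hI in
theorem main_count (hk : I.card ≤ 3) (hB : ∀ p ∈ I, B p = -1 ∨ B p = 0 ∨ B p = 1) :
    Set.ncard {A : ℕ × ℕ → ℤ | IsSignOn (fullGrid n) A ∧ CondensesTo n n I A B} *
        2 ^ (I.card + (I.filter fun p => B p ≠ 0).card) = 2 ^ (n ^ 2) := by
  set Supp := I.filter fun p => B p ≠ 0 with hSupp
  have hsub1 : Supp.image Prod.fst ⊆ I.image Prod.fst :=
    Finset.image_subset_image (Finset.filter_subset _ _)
  have hsub2 : Supp.image Prod.snd ⊆ I.image Prod.snd :=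
    Finset.image_subset_image (Finset.filter_subset _ _)
  have hS3 : Supp.card ≤ 3 := le_trans (Finset.card_filter_le _ _) hk
  have hcnt := cnt_count Supp.card (fun p => B p = -1) Supp
    (I.image Prod.fst) (I.image Prod.snd) rfl hS3 hsub1 hsub2
  have hN : Set.ncard {A : ℕ × ℕ → ℤ | IsSignOn (fullGrid n) A ∧ CondensesTo n n I A B} =
      cnt (fun p => B p = -1) Supp (I.image Prod.fst) (I.image Prod.snd) * 2 *
        2 ^ ((fullGrid n \ chioExt n n I).card) := by
    rw [stepA, stepB B hn hI, stepC B hn hI hB, stepD B hn hI, stepE B hn hI hB]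
  have hGE : (fullGrid n \ chioExt n n I).card = n ^ 2 - (chioExt n n I).card := by
    rw [Finset.card_sdiff_of_subset (chio_subset hn hI), card_fullGrid]
  have hEG : (chioExt n n I).card ≤ n ^ 2 := by
    rw [← card_fullGrid]
    exact Finset.card_le_card (chio_subset hn hI)
  have hE := card_chioExt hn hI
  rw [hN, hGE]
  have expand : cnt (fun p => B p = -1) Supp (I.image Prod.fst) (I.image Prod.snd) * 2 *
      2 ^ (n ^ 2 - (chioExt n n I).card) * 2 ^ (I.card + Supp.card) =
      (cnt (fun p => B p = -1) Supp (I.image Prod.fst) (I.image Prod.snd) * 2 ^ Supp.card) *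
        2 ^ (1 + (n ^ 2 - (chioExt n n I).card) + I.card) := by
    ring
  rw [expand, hcnt, ← pow_add]
  congr 1
  omega

include hn hI in
theorem main_prob (hk : I.card ≤ 3) (hB : ∀ p ∈ I, B p = -1 ∨ B p = 0 ∨ B p = 1) :
    PchioN n I B = PlcfN I B := by
  have h := main_count B hn hI hk hB
  rw [PchioN, PlcfN, div_pow, one_pow]
  rw [div_eq_div_iff (by positivity) (by positivity)]
  have := congrArg (fun m : ℕ => (m : ℚ)) h
  push_cast at this ⊢
  linarith
end Final

/-- **Three-wise independence of Chio condensates (Theorem Ex3).** For `n ≥ 2`,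
`I ⊆ {1,…,n-1}²` with `|I| ≤ 3` and `B : I → {−1,0,+1}`, the number of
`A : {1,…,n}² → {±1}` condensing to `B` equals `2^{n² − |I| − |Supp(B)|}` (stated
multiplied through by `2^{|I| + |Supp(B)|}`); equivalently
`P_chio[E_B^{[n−1]²}] = P_lcf[E_B^{[n−1]²}] = (1/2)^{|I| + |Supp(B)|}`. -/
theorem threewise_independence (n : ℕ) (hn : 2 ≤ n)
    (I : Finset (ℕ × ℕ)) (hI : I ⊆ mgrid n n) (hk : I.card ≤ 3)
    (B : ℕ × ℕ → ℤ) (hB : ∀ p ∈ I, B p = -1 ∨ B p = 0 ∨ B p = 1) :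
    Set.ncard {A : ℕ × ℕ → ℤ | IsSignOn (fullGrid n) A ∧ CondensesTo n n I A B} *
        2 ^ (I.card + (I.filter fun p => B p ≠ 0).card) = 2 ^ (n ^ 2) ∧
      PchioN n I B = PlcfN I B := by
  exact ⟨main_count B hn hI hk hB, main_prob B hn hI hk hB⟩
end
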